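/- arXiv:1709.09476 — 8 statements merged into one kernel-verified Lean document; each statement's English description precedes it below -/
import Mathlib

section
/- Let L ⊂ ℂ⁴ be a 2-dimensional ℂ-linear subspace such that every (x₀,x₁,x₂,x₃) ∈ L satisfies x₀(x₁²+x₂²) = x₃³. Then L is one of the following three subspaces: {x₃ = 0, x₁ − i x₂ = 0}, {x₃ = 0, x₁ + i x₂ = 0}, or {x₃ = 0, x₀ = 0}. Equivalently, the only lines contained in the cubic surface V over ℂ are ℓ₁ = {x₃ = x₁ − i x₂ = 0}, ℓ₂ = {x₃ = x₁ + i x₂ = 0} and ℓ₃ = {x₃ = x₀ = 0}. -/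
open Complex Polynomial

lemma cube_poly (a b c d e f : ℂ) (h : ∀ t : ℂ, (a + b*t)*(c + d*t)*(e + f*t) = 0) :
    (a = 0 ∧ b = 0) ∨ (c = 0 ∧ d = 0) ∨ (e = 0 ∧ f = 0) := by
  have hp : (C a + C b * X) * (C c + C d * X) * (C e + C f * X) = (0 : ℂ[X]) := by
    apply Polynomial.funext
    intro r
    simpa using h r
  have hlin : ∀ x y : ℂ, C x + C y * X = 0 → x = 0 ∧ y = 0 := by
    intro x y hxy
    constructor
    · have := congrArg (fun p => Polynomial.coeff p 0) hxy; simpa using this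
    · have := congrArg (fun p => Polynomial.coeff p 1) hxy; simpa using this
  rcases mul_eq_zero.mp hp with h1 | h3
  · rcases mul_eq_zero.mp h1 with h1 | h2
    · exact Or.inl (hlin _ _ h1)
    · exact Or.inr (Or.inl (hlin _ _ h2))
  · exact Or.inr (Or.inr (hlin _ _ h3))

lemma step_lemma (J A0 A1 A2 B0 B1 B2 B3 : ℂ) (hJ : J^2 = -1) (hB3 : B3 ≠ 0)
    (e2 : B0*(A1^2+A2^2) + 2*A0*(A1*B1+A2*B2) = 0)
    (e3 : A0*(B1^2+B2^2) + 2*B0*(A1*B1+A2*B2) = 0)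
    (e4 : B0*(B1^2+B2^2) = B3^3)
    (hG : A1 + J*A2 = 0) : A0 = 0 ∧ A1 = 0 ∧ A2 = 0 := by
  have h3 : B3^3 ≠ 0 := pow_ne_zero _ hB3
  have hB0 : B0 ≠ 0 := by intro h; rw [h, zero_mul] at e4; exact h3 e4.symm
  have hQ : B1^2 + B2^2 ≠ 0 := by intro h; rw [h, mul_zero] at e4; exact h3 e4.symm
  have hH : B1 + J*B2 ≠ 0 := by
    intro h; apply hQ; linear_combination (B1 - J*B2)*h + B2^2*hJ
  have hA1 : A1 = -J * A2 := by linear_combination hG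
  by_cases hA2 : A2 = 0
  · refine ⟨?_, by rw [hA1, hA2, mul_zero], hA2⟩
    have h5 : A0 * (B1^2+B2^2) = 0 := by
      rw [hA1, hA2] at e3; linear_combination e3
    exact (mul_eq_zero.mp h5).resolve_right hQ
  · exfalso
    rw [hA1] at e2 e3
    have h2 : A0 * (A2 * (B1 + J*B2)) = 0 := by
      linear_combination (J/2)*e2 + (A0*A2*B1 - (J/2)*B0*A2^2)*hJ
    have hA0 : A0 = 0 := by
      rcases mul_eq_zero.mp h2 with h | h
      · exact h
      · rcases mul_eq_zero.mp h with h | h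
        · exact absurd h hA2
        · exact absurd h hH
    rw [hA0] at e3
    have h4 : B0 * (A2 * (B1 + J*B2)) = 0 := by
      linear_combination (J/2)*e3 + B0*A2*B1*hJ
    rcases mul_eq_zero.mp h4 with h | h
    · exact hB0 h
    · rcases mul_eq_zero.mp h with h | h
      · exact hA2 h
      · exact hH h

lemma key_lemma (A0 A1 A2 B0 B1 B2 B3 : ℂ) (hB3 : B3 ≠ 0)
    (H : ∀ s t : ℂ, (s*A0+t*B0) * ((s*A1+t*B1)^2+(s*A2+t*B2)^2) = (t*B3)^3) :
    A0 = 0 ∧ A1 = 0 ∧ A2 = 0 := by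
  have e1 : A0*(A1^2+A2^2) = 0 := by linear_combination H 1 0
  have e2 : B0*(A1^2+A2^2) + 2*A0*(A1*B1+A2*B2) = 0 := by
    linear_combination (H 1 1 - H 1 (-1))/2 - H 0 1
  have e3 : A0*(B1^2+B2^2) + 2*B0*(A1*B1+A2*B2) = 0 := by
    linear_combination (H 1 1 + H 1 (-1))/2 - H 1 0
  have e4 : B0*(B1^2+B2^2) = B3^3 := by linear_combination H 0 1
  have h3 : B3^3 ≠ 0 := pow_ne_zero _ hB3
  have hB0 : B0 ≠ 0 := by intro h; rw [h, zero_mul] at e4; exact h3 e4.symm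
  have hGG' : (A1 + I*A2)*(A1 - I*A2) = 0 := by
    by_cases hA0 : A0 = 0
    · have h5 : B0*((A1 + I*A2)*(A1 - I*A2)) = 0 := by
        rw [hA0] at e2; linear_combination e2 - B0*A2^2*Complex.I_sq
      exact (mul_eq_zero.mp h5).resolve_left hB0
    · have h5 : A0*((A1 + I*A2)*(A1 - I*A2)) = 0 := by
        linear_combination e1 - A0*A2^2*Complex.I_sq
      exact (mul_eq_zero.mp h5).resolve_left hA0
  rcases mul_eq_zero.mp hGG' with hG | hG'
  · exact step_lemma I A0 A1 A2 B0 B1 B2 B3 Complex.I_sq hB3 e2 e3 e4 hG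
  · exact step_lemma (-I) A0 A1 A2 B0 B1 B2 B3 (by rw [neg_sq]; exact Complex.I_sq)
      hB3 e2 e3 e4 (by linear_combination hG')

lemma aux_eq (L T : Submodule ℂ (Fin 4 → ℂ)) (hrank : Module.finrank ℂ L = 2)
    (hLT : L ≤ T) (w1 w2 : Fin 4 → ℂ)
    (hspan : T ≤ Submodule.span ℂ {w1, w2}) :
    L = T := by
  have hcard : Module.finrank ℂ (Submodule.span ℂ ({w1, w2} : Set (Fin 4 → ℂ))) ≤ 2 := by
    classical
    refine (finrank_span_le_card _).trans ?_
    rw [Set.toFinset_insert, Set.toFinset_singleton]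
    exact (Finset.card_insert_le _ _).trans (by simp)
  have hT2 : Module.finrank ℂ T ≤ 2 := (Submodule.finrank_mono hspan).trans hcard
  exact Submodule.eq_of_le_of_finrank_le hLT (by omega)

lemma final_eq (L : Submodule ℂ (Fin 4 → ℂ)) (hrank : Module.finrank ℂ L = 2)
    (u v : Fin 4 → ℂ)
    (hrep : ∀ x ∈ L, ∃ s t : ℂ, x = s • u + t • v)
    (φ : (Fin 4 → ℂ) →ₗ[ℂ] ℂ)
    (hu3 : u 3 = 0) (hv3 : v 3 = 0) (hφu : φ u = 0) (hφv : φ v = 0)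
    (w1 w2 : Fin 4 → ℂ)
    (hsp : ∀ x : Fin 4 → ℂ, x 3 = 0 → φ x = 0 → ∃ s t : ℂ, s • w1 + t • w2 = x) :
    (L : Set (Fin 4 → ℂ)) = {x | x 3 = 0 ∧ φ x = 0} := by
  have hTset : ((LinearMap.ker (LinearMap.proj 3 : (Fin 4 → ℂ) →ₗ[ℂ] ℂ) ⊓ LinearMap.ker φ :
      Submodule ℂ (Fin 4 → ℂ)) : Set (Fin 4 → ℂ)) = {x | x 3 = 0 ∧ φ x = 0} := by
    ext x
    simp [Submodule.mem_inf, LinearMap.mem_ker]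
  have hLT : L ≤ LinearMap.ker (LinearMap.proj 3 : (Fin 4 → ℂ) →ₗ[ℂ] ℂ) ⊓ LinearMap.ker φ := by
    intro x hx
    obtain ⟨s, t, rfl⟩ := hrep x hx
    refine Submodule.mem_inf.mpr ⟨?_, ?_⟩
    · simp [LinearMap.mem_ker, hu3, hv3]
    · rw [LinearMap.mem_ker, map_add, map_smul, map_smul, hφu, hφv]
      simp
  have hTspan : (LinearMap.ker (LinearMap.proj 3 : (Fin 4 → ℂ) →ₗ[ℂ] ℂ) ⊓ LinearMap.ker φ)
      ≤ Submodule.span ℂ {w1, w2} := by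
    intro x hx
    obtain ⟨hx3, hxφ⟩ := Submodule.mem_inf.mp hx
    rw [Submodule.mem_span_pair]
    exact hsp x (by simpa using hx3) (by simpa using hxφ)
  rw [aux_eq L _ hrank hLT w1 w2 hTspan, hTset]

/-- The only lines contained in the cubic surface `x₀(x₁²+x₂²) = x₃³` over `ℂ` are
`ℓ₁ = {x₃ = x₁ - i x₂ = 0}`, `ℓ₂ = {x₃ = x₁ + i x₂ = 0}` and `ℓ₃ = {x₃ = x₀ = 0}`. -/
theorem lines_on_cubic_surface (L : Submodule ℂ (Fin 4 → ℂ))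
    (hrank : Module.finrank ℂ L = 2)
    (hsub : ∀ x ∈ L, x 0 * (x 1 ^ 2 + x 2 ^ 2) = x 3 ^ 3) :
    (L : Set (Fin 4 → ℂ)) = {x | x 3 = 0 ∧ x 1 - I * x 2 = 0} ∨
    (L : Set (Fin 4 → ℂ)) = {x | x 3 = 0 ∧ x 1 + I * x 2 = 0} ∨
    (L : Set (Fin 4 → ℂ)) = {x | x 3 = 0 ∧ x 0 = 0} := by
  let b := Module.finBasisOfFinrankEq ℂ L hrank
  set u : Fin 4 → ℂ := ((b 0 : L) : Fin 4 → ℂ) with hu_def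
  set v : Fin 4 → ℂ := ((b 1 : L) : Fin 4 → ℂ) with hv_def
  have hu : u ∈ L := (b 0).2
  have hv : v ∈ L := (b 1).2
  have hmem : ∀ s t : ℂ, s • u + t • v ∈ L := fun s t =>
    L.add_mem (L.smul_mem s hu) (L.smul_mem t hv)
  have H : ∀ s t : ℂ,
      (s*u 0+t*v 0)*((s*u 1+t*v 1)^2+(s*u 2+t*v 2)^2) = (s*u 3+t*v 3)^3 := by
    intro s t
    have h := hsub _ (hmem s t)
    simpa using h
  have hrep : ∀ x ∈ L, ∃ s t : ℂ, x = s • u + t • v := by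
    intro x hx
    refine ⟨b.repr ⟨x, hx⟩ 0, b.repr ⟨x, hx⟩ 1, ?_⟩
    have h := b.sum_repr ⟨x, hx⟩
    have h2 := congrArg (Subtype.val) h
    rw [Fin.sum_univ_two] at h2
    simp only [Submodule.coe_add, SetLike.val_smul] at h2
    exact h2.symm
  have hli := linearIndependent_fin2.mp b.linearIndependent
  have hv3 : v 3 = 0 := by
    by_contra hv3
    set c : ℂ := u 3 / v 3 with hc_def
    have hc : c * v 3 = u 3 := div_mul_cancel₀ _ hv3
    have Hc : ∀ s t : ℂ,
        (s*(u 0 - c*v 0)+t*v 0) *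
          ((s*(u 1 - c*v 1)+t*v 1)^2+(s*(u 2 - c*v 2)+t*v 2)^2) = (t*v 3)^3 := by
      intro s t
      have h := H s (t - s*c)
      linear_combination h +
        (-3*(t*v 3)^2*s + 3*t*v 3*s^2*(c*v 3 - u 3) - s^3*(c*v 3 - u 3)^2) * hc
    obtain ⟨h0, h1, h2⟩ := key_lemma (u 0 - c*v 0) (u 1 - c*v 1) (u 2 - c*v 2)
      (v 0) (v 1) (v 2) (v 3) hv3 Hc
    have hdiff : ∀ j : Fin 4, u j - c * v j = 0 := by
      intro j
      fin_cases j
      · exact h0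
      · exact h1
      · exact h2
      · exact sub_eq_zero.mpr hc.symm
    have huv : c • v = u := by
      funext i
      have := sub_eq_zero.mp (hdiff i)
      simpa using this.symm
    exact hli.2 c (Subtype.ext huv)
  have hu3 : u 3 = 0 := by
    by_contra hu3
    have Hs : ∀ s t : ℂ,
        (s*v 0+t*u 0)*((s*v 1+t*u 1)^2+(s*v 2+t*u 2)^2) = (t*u 3)^3 := by
      intro s t
      have h := H t s
      linear_combination h + (3*(t*u 3)^2*s + 3*t*u 3*s^2*v 3 + s^3*v 3^2) * hv3
    obtain ⟨h0, h1, h2⟩ := key_lemma (v 0) (v 1) (v 2) (u 0) (u 1) (u 2) (u 3) hu3 Hs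
    have hvz : v = 0 := by
      funext i
      fin_cases i
      · exact h0
      · exact h1
      · exact h2
      · exact hv3
    exact hli.1 (Subtype.ext hvz)
  have Hf : ∀ t : ℂ,
      (u 0 + v 0*t)*((u 1 - I*u 2) + (v 1 - I*v 2)*t)*((u 1 + I*u 2) + (v 1 + I*v 2)*t) = 0 := by
    intro t
    have h := H 1 t
    rw [hu3, hv3] at h
    linear_combination h - (1*u 0+t*v 0)*(1*u 2+t*v 2)^2*Complex.I_sq
  rcases cube_poly (u 0) (v 0) (u 1 - I*u 2) (v 1 - I*v 2) (u 1 + I*u 2) (v 1 + I*v 2) Hf with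
    ⟨h1, h2⟩ | ⟨h1, h2⟩ | ⟨h1, h2⟩
  · right; right
    have hfe := final_eq L hrank u v hrep (LinearMap.proj 0) hu3 hv3 h1 h2
      ![0,1,0,0] ![0,0,1,0] ?_
    · rw [hfe]
      ext x
      simp
    · intro x hx3 hx0
      simp only [LinearMap.proj_apply] at hx0
      refine ⟨x 1, x 2, ?_⟩
      funext i
      fin_cases i <;> simp [hx3, hx0]
  · left
    have hfe := final_eq L hrank u v hrep (LinearMap.proj 1 - I • LinearMap.proj 2) hu3 hv3
      (by simpa using h1) (by simpa using h2) ![1,0,0,0] ![0,I,1,0] ?_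
    · rw [hfe]
      ext x
      simp
    · intro x hx3 hxφ
      simp only [LinearMap.sub_apply, LinearMap.smul_apply, LinearMap.proj_apply,
        smul_eq_mul] at hxφ
      refine ⟨x 0, x 2, ?_⟩
      funext i
      fin_cases i <;> simp [hx3] <;> linear_combination -hxφ
  · right; left
    have hfe := final_eq L hrank u v hrep (LinearMap.proj 1 + I • LinearMap.proj 2) hu3 hv3
      (by simpa using h1) (by simpa using h2) ![1,0,0,0] ![0,-I,1,0] ?_
    · rw [hfe]
      ext x
      simp
    · intro x hx3 hxφ
      simp only [LinearMap.add_apply, LinearMap.smul_apply, LinearMap.proj_apply,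
        smul_eq_mul] at hxφ
      refine ⟨x 0, x 2, ?_⟩
      funext i
      fin_cases i <;> simp [hx3] <;> linear_combination -hxφ
end

section
/- One has (∫₀¹ (1−z₃)² dz₃) × (1/2) × meas{(z₁,z₄) ∈ ℝ²_{≥0} : 3z₁ ≤ 1 and 2z₄ − z₁ ≤ 1} = 7/216, where meas denotes the 2-dimensional Lebesgue measure. Equivalently, (1/6)·∫₀^{1/3} (1+z₁)/2 dz₁ = 7/216. -/
open Real MeasureTheory intervalIntegral

lemma integral_one_sub_sq : (∫ z in (0:ℝ)..1, (1 - z) ^ 2) = 1/3 := by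
  have : (∫ z in (0:ℝ)..1, (1 - z) ^ 2) = ∫ z in (1-(1:ℝ))..(1-0), z ^ 2 := by
    rw [← intervalIntegral.integral_comp_sub_left (fun z => z ^ 2) 1]
  rw [this]
  norm_num [integral_pow]

lemma integral_half : (∫ z in (0:ℝ)..(1/3 : ℝ), (1 + z) / 2) = 7/36 := by
  have h : (fun z : ℝ => (1 + z) / 2) = fun z : ℝ => (1:ℝ)/2 + (1/2) * z := by
    funext z; ring
  rw [h, intervalIntegral.integral_add intervalIntegrable_const
    (intervalIntegrable_id.const_mul _),
    intervalIntegral.integral_const_mul, integral_id]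
  norm_num

lemma set_eq : {p : ℝ × ℝ | 0 ≤ p.1 ∧ 0 ≤ p.2 ∧ 3 * p.1 ≤ 1 ∧ 2 * p.2 - p.1 ≤ 1}
    = {p : ℝ × ℝ | p.1 ∈ Set.Icc (0:ℝ) (1/3) ∧ p.2 ∈ Set.Icc (0:ℝ) ((1 + p.1)/2)} := by
  ext ⟨x, y⟩
  simp only [Set.mem_setOf_eq, Set.mem_Icc]
  constructor
  · rintro ⟨h1, h2, h3, h4⟩
    exact ⟨⟨h1, by linarith⟩, h2, by linarith⟩
  · rintro ⟨⟨h1, h2⟩, h3, h4⟩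
    exact ⟨h1, h3, by linarith, by linarith⟩

lemma vol_eq : (volume {p : ℝ × ℝ | 0 ≤ p.1 ∧ 0 ≤ p.2 ∧ 3 * p.1 ≤ 1 ∧ 2 * p.2 - p.1 ≤ 1}).toReal
    = 7/36 := by
  rw [set_eq]
  have hms : MeasurableSet {p : ℝ × ℝ | p.1 ∈ Set.Icc (0:ℝ) (1/3) ∧
      p.2 ∈ Set.Icc ((fun x : ℝ => (0:ℝ)) p.1) ((fun x : ℝ => (1 + x)/2) p.1)} :=
    measurableSet_region_between_cc (f := fun _ : ℝ => (0:ℝ)) (g := fun x : ℝ => (1+x)/2) measurable_const (by fun_prop) measurableSet_Icc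
  have key : volume {p : ℝ × ℝ | p.1 ∈ Set.Icc (0:ℝ) (1/3) ∧
      p.2 ∈ Set.Icc (0:ℝ) ((1 + p.1)/2)} = ENNReal.ofReal (7/36) := by
    rw [Measure.volume_eq_prod, Measure.prod_apply hms]
    have hslice : ∀ x : ℝ, volume (Prod.mk x ⁻¹' {p : ℝ × ℝ | p.1 ∈ Set.Icc (0:ℝ) (1/3) ∧
        p.2 ∈ Set.Icc ((fun x : ℝ => (0:ℝ)) p.1) ((fun x : ℝ => (1 + x)/2) p.1)})
        = (Set.Icc (0:ℝ) (1/3)).indicator (fun x => ENNReal.ofReal ((1 + x)/2)) x := by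
      intro x
      by_cases hx : x ∈ Set.Icc (0:ℝ) (1/3)
      · have : Prod.mk x ⁻¹' {p : ℝ × ℝ | p.1 ∈ Set.Icc (0:ℝ) (1/3) ∧
            p.2 ∈ Set.Icc ((fun x : ℝ => (0:ℝ)) p.1) ((fun x : ℝ => (1 + x)/2) p.1)}
            = Set.Icc (0:ℝ) ((1 + x)/2) := by
          ext y
          simp only [Set.mem_preimage, Set.mem_setOf_eq, hx, true_and]
        rw [this, Real.volume_Icc, Set.indicator_of_mem hx]
        norm_num
      · have : Prod.mk x ⁻¹' {p : ℝ × ℝ | p.1 ∈ Set.Icc (0:ℝ) (1/3) ∧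
            p.2 ∈ Set.Icc ((fun x : ℝ => (0:ℝ)) p.1) ((fun x : ℝ => (1 + x)/2) p.1)}
            = ∅ := by
          ext y
          simp only [Set.mem_preimage, Set.mem_setOf_eq, Set.mem_empty_iff_false, iff_false,
            not_and]
          intro h; exact absurd h hx
        rw [this, Set.indicator_of_notMem hx]
        simp
    simp only [hslice]
    rw [lintegral_indicator measurableSet_Icc]
    have hint : IntegrableOn (fun x : ℝ => (1 + x)/2) (Set.Icc (0:ℝ) (1/3)) volume := by
      apply Continuous.integrableOn_Icc; fun_prop
    rw [← ofReal_integral_eq_lintegral_ofReal hint]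
    · congr 1
      rw [MeasureTheory.integral_Icc_eq_integral_Ioc,
        ← intervalIntegral.integral_of_le (by norm_num : (0:ℝ) ≤ 1/3)]
      exact integral_half
    · filter_upwards [self_mem_ae_restrict (measurableSet_Icc :
        MeasurableSet (Set.Icc (0:ℝ) (1/3)))] with x hx
      have := hx.1; simp only [Pi.zero_apply]; linarith
  rw [key, ENNReal.toReal_ofReal (by norm_num)]

/-- The effective-cone constant computation `α(Ṽ) = 7/216` as an explicit
polytope-volume computation. -/
theorem alpha_constant :
    ((∫ z in (0 : ℝ)..1, (1 - z) ^ 2) * (1 / 2) *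
      (volume {p : ℝ × ℝ | 0 ≤ p.1 ∧ 0 ≤ p.2 ∧ 3 * p.1 ≤ 1 ∧ 2 * p.2 - p.1 ≤ 1}).toReal
        = 7 / 216) ∧
    ((1 / 6 : ℝ) * ∫ z in (0 : ℝ)..(1 / 3), (1 + z) / 2) = 7 / 216 := by
  constructor
  · rw [integral_one_sub_sq, vol_eq]; norm_num
  · rw [integral_half]; norm_num
end

section
/- Let χ be the nonprincipal Dirichlet character modulo 4. Then lim_{s→1⁺} (s−1)⁴ · ∏_{p odd prime} (1 − p^{−s})^{−4} (1 − χ(p) p^{−s})^{−3} = L(1,χ)³ / 2⁴ = (1/16)·(π/4)³, where for real s > 1 the product ∏_{p>2} (1 − p^{−s})^{−4} (1 − χ(p) p^{−s})^{−3} converges. -/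
open Filter Real

/-- The nonprincipal Dirichlet character modulo 4, evaluated at a natural number. -/
noncomputable def chi (n : ℕ) : ℝ :=
  if n % 4 = 1 then 1 else if n % 4 = 3 then -1 else 0

/-- The Euler factor at an odd prime `p` of the partial Artin L-function. -/
noncomputable def eulerFactor (s : ℝ) (p : ℕ) : ℝ :=
  ((1 - (p : ℝ) ^ (-s)) ^ 4)⁻¹ * ((1 - chi p * (p : ℝ) ^ (-s)) ^ 3)⁻¹


namespace ArtinAux
open Complex Topology

noncomputable def chiC : DirichletCharacter ℂ 4 := ZMod.χ₄.ringHomComp (Int.castRingHom ℂ)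

lemma chiC_apply (n : ℕ) : chiC (n : ZMod 4) = ((chi n : ℝ) : ℂ) := by
  have h2 : n % 2 = n % 4 % 2 := (Nat.mod_mod_of_dvd n (by norm_num)).symm
  have h := ZMod.χ₄_nat_eq_if_mod_four n
  simp only [chiC, MulChar.ringHomComp_apply, h]
  have h4 : n % 4 = 0 ∨ n % 4 = 1 ∨ n % 4 = 2 ∨ n % 4 = 3 := by omega
  rcases h4 with h4 | h4 | h4 | h4 <;> simp [chi, h4, h2]

lemma chiC_oddval (k : ℕ) : chiC ((2 * k + 1 : ℕ) : ZMod 4) = (-1) ^ k := by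
  rw [chiC_apply]
  rcases Nat.even_or_odd k with ⟨m, hm⟩ | ⟨m, hm⟩ <;> subst hm
  · have h4 : (2 * (m + m) + 1) % 4 = 1 := by omega
    simp [chi, h4, Even.neg_one_pow (⟨m, rfl⟩ : Even (m + m))]
  · have h4 : (2 * (2 * m + 1) + 1) % 4 = 3 := by omega
    simp [chi, h4, Odd.neg_one_pow (⟨m, rfl⟩ : Odd (2 * m + 1))]

noncomputable def aterm (s : ℝ) (k : ℕ) : ℝ := (-1) ^ k * (2 * (k : ℝ) + 1) ^ (-s)

noncomputable def A (s : ℝ) : ℝ := ∑' k, aterm s k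

lemma summable_f {s : ℝ} (hs : 1 < s) :
    Summable (fun k : ℕ => (2 * (k : ℝ) + 1) ^ (-s)) := by
  have h : Summable (fun n : ℕ => (n : ℝ) ^ (-s)) :=
    Real.summable_nat_rpow.mpr (by linarith)
  have h2 := h.comp_injective
    (fun a b hab => by simpa using hab : Function.Injective (fun k : ℕ => 2 * k + 1))
  refine h2.congr fun k => ?_
  simp only [Function.comp_apply]
  congr 1
  push_cast
  ring

lemma summable_aterm {s : ℝ} (hs : 1 < s) : Summable (aterm s) := by
  refine Summable.of_norm ?_
  refine (summable_f hs).congr fun k => ?_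
  have : (0:ℝ) ≤ (2 * (k : ℝ) + 1) ^ (-s) := by positivity
  simp [aterm, norm_mul, _root_.abs_of_nonneg this]

lemma antitone_f {s : ℝ} (hs : 0 ≤ s) :
    Antitone (fun k : ℕ => (2 * (k : ℝ) + 1) ^ (-s)) := by
  intro a b hab
  simp only []
  have hpa : (0:ℝ) < 2 * (a : ℝ) + 1 := by positivity
  have hpb : (0:ℝ) < 2 * (b : ℝ) + 1 := by positivity
  show (2 * (b : ℝ) + 1) ^ (-s) ≤ (2 * (a : ℝ) + 1) ^ (-s)
  rw [Real.rpow_neg hpa.le, Real.rpow_neg hpb.le]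
  have hle : (2 * (a : ℝ) + 1) ^ s ≤ (2 * (b : ℝ) + 1) ^ s := by
    have : (a : ℝ) ≤ b := Nat.cast_le.mpr hab
    exact Real.rpow_le_rpow hpa.le (by linarith) hs
  have := Real.rpow_pos_of_pos hpa s
  gcongr

lemma abs_sub_partial {f : ℕ → ℝ} {l : ℝ}
    (hfl : Tendsto (fun n => ∑ i ∈ Finset.range n, (-1) ^ i * f i) atTop (𝓝 l))
    (hfa : Antitone f) (hf0 : ∀ n, 0 ≤ f n) (N : ℕ) :
    |l - ∑ i ∈ Finset.range N, (-1) ^ i * f i| ≤ f N := by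
  rcases Nat.even_or_odd N with ⟨k, hk⟩ | ⟨k, hk⟩
  · have hN : N = 2 * k := by omega
    subst hN
    have h1 := hfa.alternating_series_le_tendsto hfl k
    have h2 := hfa.tendsto_le_alternating_series hfl k
    have hstep : ∑ i ∈ Finset.range (2 * k + 1), (-1 : ℝ) ^ i * f i
        = ∑ i ∈ Finset.range (2 * k), (-1 : ℝ) ^ i * f i + f (2 * k) := by
      rw [Finset.sum_range_succ, Even.neg_one_pow (even_two_mul k), one_mul]
    rw [hstep] at h2
    rw [abs_le]
    constructor
    · linarith [hf0 (2 * k)]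
    · linarith
  · have hN : N = 2 * k + 1 := by omega
    subst hN
    have h2 := hfa.tendsto_le_alternating_series hfl k
    have h1 := hfa.alternating_series_le_tendsto hfl (k + 1)
    have hstep : ∑ i ∈ Finset.range (2 * (k + 1)), (-1 : ℝ) ^ i * f i
        = ∑ i ∈ Finset.range (2 * k + 1), (-1 : ℝ) ^ i * f i - f (2 * k + 1) := by
      have h : 2 * (k + 1) = (2 * k + 1) + 1 := by ring
      rw [h, Finset.sum_range_succ, Odd.neg_one_pow ⟨k, rfl⟩]
      ring
    rw [hstep] at h1
    rw [abs_le]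
    constructor
    · linarith
    · linarith [hf0 (2 * k + 1)]

lemma tendsto_partial_one :
    Tendsto (fun n => ∑ i ∈ Finset.range n, (-1 : ℝ) ^ i * (2 * (i : ℝ) + 1) ^ (-(1:ℝ)))
      atTop (𝓝 (π / 4)) := by
  convert Real.tendsto_sum_pi_div_four using 2 with n
  refine Finset.sum_congr rfl fun i _ => ?_
  rw [Real.rpow_neg_one, div_eq_mul_inv]

lemma tendsto_A : Tendsto A (𝓝[>] (1:ℝ)) (𝓝 (π / 4)) := by
  rw [Metric.tendsto_nhdsWithin_nhds]
  intro ε hε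
  obtain ⟨N, hN⟩ := exists_nat_gt (4 / ε)
  have hpos : (0:ℝ) < 2 * (N : ℝ) + 1 := by positivity
  have hNb : (2 * (N : ℝ) + 1)⁻¹ < ε / 4 := by
    rw [inv_lt_iff_one_lt_mul₀ hpos]
    have h4 : 4 / ε < 2 * (N : ℝ) + 1 := by linarith
    rw [div_lt_iff₀ hε] at h4
    nlinarith
  set SN : ℝ → ℝ := fun t => ∑ i ∈ Finset.range N, (-1 : ℝ) ^ i * (2 * (i : ℝ) + 1) ^ (-t)
    with hSN
  have hcont : ContinuousAt SN 1 := by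
    refine Continuous.continuousAt ?_
    refine continuous_finset_sum _ fun i _ => ?_
    refine continuous_const.mul ?_
    refine continuous_iff_continuousAt.mpr fun x => ?_
    exact (Real.continuousAt_const_rpow (by positivity)).comp continuous_neg.continuousAt
  obtain ⟨δ, hδpos, hδ⟩ := Metric.continuousAt_iff.mp hcont (ε / 4) (by linarith)
  refine ⟨δ, hδpos, fun s hs hsd => ?_⟩
  have hs1 : 1 < s := hs
  have htends : Tendsto (fun n => ∑ i ∈ Finset.range n,
      (-1 : ℝ) ^ i * (2 * (i : ℝ) + 1) ^ (-s)) atTop (𝓝 (A s)) := by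
    have := (summable_aterm hs1).hasSum.tendsto_sum_nat
    simpa [A, aterm] using this
  have hb1 : |A s - SN s| ≤ (2 * (N : ℝ) + 1) ^ (-s) :=
    abs_sub_partial htends (antitone_f (by linarith)) (fun n => by positivity) N
  have hb1' : (2 * (N : ℝ) + 1) ^ (-s) ≤ (2 * (N : ℝ) + 1)⁻¹ := by
    rw [← Real.rpow_neg_one]
    refine Real.rpow_le_rpow_of_exponent_le ?_ (by linarith)
    have : (0:ℝ) ≤ (N:ℝ) := Nat.cast_nonneg N
    linarith
  have hb2 : |π / 4 - SN 1| ≤ (2 * (N : ℝ) + 1) ^ (-(1:ℝ)) :=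
    abs_sub_partial tendsto_partial_one (antitone_f zero_le_one) (fun n => by positivity) N
  rw [Real.rpow_neg_one] at hb2
  have hb3 : |SN s - SN 1| < ε / 4 := by
    have := hδ hsd
    rwa [Real.dist_eq] at this
  rw [Real.dist_eq]
  have htri : |A s - π / 4| ≤ |A s - SN s| + |SN s - SN 1| + |SN 1 - π / 4| := by
    calc |A s - π / 4| ≤ |A s - SN 1| + |SN 1 - π / 4| := abs_sub_le _ _ _
      _ ≤ (|A s - SN s| + |SN s - SN 1|) + |SN 1 - π / 4| := by
          gcongr
          exact abs_sub_le _ _ _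
  rw [abs_sub_comm (SN 1)] at htri
  linarith

/-- complex value of the partial Euler product -/
noncomputable def Cval (s : ℝ) : ℂ :=
  (riemannZeta s * (1 - 2 ^ (-(s:ℂ)))) ^ 4 * (LSeries (fun n : ℕ => chiC n) s) ^ 3

lemma two_cpow_ne (s : ℝ) (hs : 1 < s) : (1:ℂ) - 2 ^ (-(s:ℂ)) ≠ 0 := by
  have hnorm : ‖(2:ℂ) ^ (-(s:ℂ))‖ < 1 := by
    rw [show ((2:ℂ)) = ((2:ℝ):ℂ) by norm_num, ← Complex.ofReal_neg,
      ← Complex.ofReal_cpow (by norm_num : (0:ℝ) ≤ 2)]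
    rw [Complex.norm_real, Real.norm_eq_abs, _root_.abs_of_nonneg (Real.rpow_nonneg (by norm_num) _)]
    exact Real.rpow_lt_one_of_one_lt_of_neg (by norm_num) (by linarith)
  intro h
  have : (2:ℂ) ^ (-(s:ℂ)) = 1 := by linear_combination -h
  rw [this] at hnorm
  simp at hnorm

lemma hasProd_complex (s : ℝ) (hs : 1 < s) :
    HasProd (fun p : {p : ℕ // p.Prime ∧ p ≠ 2} => ((eulerFactor s p : ℝ) : ℂ)) (Cval s) := by
  have hsc : 1 < (s:ℂ).re := by simpa using hs
  set two : Nat.Primes := ⟨2, Nat.prime_two⟩ with htwo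
  set ι : {p : ℕ // p.Prime ∧ p ≠ 2} → Nat.Primes := fun p => ⟨p.1, p.2.1⟩ with hι
  have hinj : Function.Injective ι := fun a b h => Subtype.ext (congrArg Subtype.val h : (ι a).1 = (ι b).1)
  have hne : ∀ p : {p : ℕ // p.Prime ∧ p ≠ 2}, ι p ≠ two := by
    intro p h
    exact p.2.2 (congrArg Subtype.val h)
  have hmem : ∀ q : Nat.Primes, q ∉ Set.range ι → q = two := by
    intro q hq
    by_contra h
    exact hq ⟨⟨q.1, q.2, fun h2 => h (Subtype.ext h2)⟩, rfl⟩
  have h2ne := two_cpow_ne s hs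
  -- zeta part
  have hZ := riemannZeta_eulerProduct_hasProd hsc
  have hfac2 : HasProd
      (fun q : Nat.Primes => if q = two then (1 - (2:ℂ) ^ (-(s:ℂ))) else 1)
      (1 - (2:ℂ) ^ (-(s:ℂ))) := hasProd_ite_eq two _
  have hZ2 := hZ.mul hfac2
  have hZodd : HasProd (fun p : {p : ℕ // p.Prime ∧ p ≠ 2} =>
      (1 - (p.1:ℂ) ^ (-(s:ℂ)))⁻¹) (riemannZeta s * (1 - 2 ^ (-(s:ℂ)))) := by
    have hoff : ∀ q ∉ Set.range ι,
        (1 - (q:ℂ) ^ (-(s:ℂ)))⁻¹ * (if q = two then (1 - (2:ℂ) ^ (-(s:ℂ))) else 1) = 1 := by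
      intro q hq
      rw [hmem q hq, if_pos rfl]
      have : ((two : Nat.Primes) : ℂ) = 2 := by norm_num [htwo]
      rw [this]
      exact inv_mul_cancel₀ h2ne
    have := (hinj.hasProd_iff hoff).mpr hZ2
    refine this.congr_fun fun p => ?_
    simp only [Function.comp_apply, if_neg (hne p), mul_one]
    rfl
  -- L part
  have hL := DirichletCharacter.LSeries_eulerProduct_hasProd chiC hsc
  have hLodd : HasProd (fun p : {p : ℕ // p.Prime ∧ p ≠ 2} =>
      (1 - chiC (p.1 : ZMod 4) * (p.1:ℂ) ^ (-(s:ℂ)))⁻¹)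
      (LSeries (fun n : ℕ => chiC n) s) := by
    have hoff : ∀ q ∉ Set.range ι,
        (1 - chiC ((q:ℕ) : ZMod 4) * (q:ℂ) ^ (-(s:ℂ)))⁻¹ = 1 := by
      intro q hq
      rw [hmem q hq]
      have h2 : chiC (((two:Nat.Primes) : ℕ) : ZMod 4) = 0 := by
        rw [chiC_apply]
        norm_num [htwo, chi]
      rw [h2]
      norm_num
    have := (hinj.hasProd_iff hoff).mpr hL
    exact this.congr_fun fun p => rfl
  -- combine
  have h7 := ((hZodd.mul hZodd).mul (hZodd.mul hZodd)).mul ((hLodd.mul hLodd).mul hLodd)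
  have hfun : (fun p : {p : ℕ // p.Prime ∧ p ≠ 2} => ((eulerFactor s p : ℝ) : ℂ))
      = fun p => ((1 - (p.1:ℂ) ^ (-(s:ℂ)))⁻¹ * (1 - (p.1:ℂ) ^ (-(s:ℂ)))⁻¹) *
          ((1 - (p.1:ℂ) ^ (-(s:ℂ)))⁻¹ * (1 - (p.1:ℂ) ^ (-(s:ℂ)))⁻¹) *
        ((1 - chiC (p.1 : ZMod 4) * (p.1:ℂ) ^ (-(s:ℂ)))⁻¹ *
          (1 - chiC (p.1 : ZMod 4) * (p.1:ℂ) ^ (-(s:ℂ)))⁻¹ *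
          (1 - chiC (p.1 : ZMod 4) * (p.1:ℂ) ^ (-(s:ℂ)))⁻¹) := by
    funext p
    have hXp : (((p.1:ℝ) ^ (-s) : ℝ) : ℂ) = (p.1:ℂ) ^ (-(s:ℂ)) := by
      rw [Complex.ofReal_cpow (Nat.cast_nonneg _), Complex.ofReal_neg, Complex.ofReal_natCast]
    have key : ∀ a b : ℂ, (a ^ 4)⁻¹ * (b ^ 3)⁻¹
        = (a⁻¹ * a⁻¹) * (a⁻¹ * a⁻¹) * ((b⁻¹ * b⁻¹) * b⁻¹) := by
      intro a b
      rw [← inv_pow, ← inv_pow]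
      ring
    simp only [eulerFactor, Complex.ofReal_mul, Complex.ofReal_inv, Complex.ofReal_pow,
      Complex.ofReal_sub, Complex.ofReal_one, hXp, chiC_apply]
    exact key _ _
  have hval : Cval s = riemannZeta s * (1 - 2 ^ (-(s:ℂ))) * (riemannZeta s * (1 - 2 ^ (-(s:ℂ)))) *
      (riemannZeta s * (1 - 2 ^ (-(s:ℂ))) * (riemannZeta s * (1 - 2 ^ (-(s:ℂ))))) *
      (LSeries (fun n : ℕ => chiC n) s * LSeries (fun n : ℕ => chiC n) s *
        LSeries (fun n : ℕ => chiC n) s) := by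
    rw [Cval]; ring
  rw [hfun, hval]
  exact h7


lemma LSeries_eq (s : ℝ) :
    LSeries (fun n : ℕ => chiC n) (s : ℂ) = ((A s : ℝ) : ℂ) := by
  rw [LSeries]
  have hinj : Function.Injective (fun k : ℕ => 2 * k + 1) := fun a b hab => by simpa using hab
  have hsupp : Function.support (fun n => LSeries.term (fun n : ℕ => chiC n) (s:ℂ) n)
      ⊆ Set.range (fun k : ℕ => 2 * k + 1) := by
    intro n hn
    rcases Nat.even_or_odd n with ⟨m, hm⟩ | ⟨m, hm⟩
    · exfalso
      apply hn
      show LSeries.term (fun n : ℕ => chiC n) (s:ℂ) n = 0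
      rcases Nat.eq_zero_or_pos n with h0 | h0
      · simp [h0, LSeries.term]
      · rw [LSeries.term_of_ne_zero h0.ne']
        have : chi n = 0 := by
          have : n % 4 = 0 ∨ n % 4 = 2 := by omega
          rcases this with h | h <;> simp [chi, h]
        rw [chiC_apply, this]
        simp
    · exact ⟨m, by simpa using hm.symm⟩
  rw [← Function.Injective.tsum_eq hinj hsupp]
  have hterm : ∀ k : ℕ, LSeries.term (fun n : ℕ => chiC n) (s:ℂ) (2 * k + 1)
      = ((aterm s k : ℝ) : ℂ) := by
    intro k
    rw [LSeries.term_of_ne_zero (by omega : 2 * k + 1 ≠ 0)]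
    rw [chiC_oddval k]
    have hpos : (0:ℝ) < 2 * (k:ℝ) + 1 := by positivity
    have hcast : (((2 * k + 1 : ℕ)) : ℂ) = (((2 * (k:ℝ) + 1 : ℝ)) : ℂ) := by push_cast; ring
    rw [hcast, ← Complex.ofReal_cpow hpos.le s]
    rw [aterm, Real.rpow_neg hpos.le]
    push_cast
    rw [div_eq_mul_inv]
  rw [tsum_congr hterm, ← Complex.ofReal_tsum]
  rfl

lemma hasProd_ofReal_down {ι : Type*} {f : ι → ℝ} {z : ℂ}
    (h : HasProd (fun i => ((f i : ℝ) : ℂ)) z) :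
    ∃ r : ℝ, (r : ℂ) = z ∧ HasProd f r := by
  have hmem : z ∈ Set.range ((↑) : ℝ → ℂ) := by
    refine IsClosed.mem_of_tendsto
      Complex.isUniformEmbedding_ofReal.isClosedEmbedding.isClosed_range h
      (Eventually.of_forall fun u => ⟨∏ i ∈ u, f i, by push_cast; rfl⟩)
  obtain ⟨r, hr⟩ := hmem
  refine ⟨r, hr, ?_⟩
  rw [← hr] at h
  rw [HasProd, ← Filter.tendsto_ofReal_iff]
  refine h.congr fun u => ?_
  push_cast
  rfl

end ArtinAux

open ArtinAux Complex Topology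

/-- The partial Artin L-function `∏_{p>2} (1-p^{-s})^{-4}(1-χ(p)p^{-s})^{-3}` converges for
real `s > 1` and `(s-1)⁴` times it tends to `L(1,χ)³/2⁴ = (1/16)(π/4)³` as `s → 1⁺`. -/
theorem artin_L_function_pole :
    (∀ s : ℝ, 1 < s →
      Multipliable (fun p : {p : ℕ // p.Prime ∧ p ≠ 2} => eulerFactor s p)) ∧
    Tendsto
      (fun s : ℝ => (s - 1) ^ 4 *
        ∏' p : {p : ℕ // p.Prime ∧ p ≠ 2}, eulerFactor s p)
      (nhdsWithin 1 (Set.Ioi 1)) (nhds ((π / 4) ^ 3 / 2 ^ 4)) := by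
  have hex : ∀ s : ℝ, 1 < s → ∃ P : ℝ,
      HasProd (fun p : {p : ℕ // p.Prime ∧ p ≠ 2} => eulerFactor s p) P ∧ (P:ℂ) = Cval s := by
    intro s hs
    obtain ⟨r, hr, hP⟩ := hasProd_ofReal_down (hasProd_complex s hs)
    exact ⟨r, hP, hr⟩
  constructor
  · intro s hs
    obtain ⟨P, hP, -⟩ := hex s hs
    exact ⟨P, hP⟩
  · rw [← Filter.tendsto_ofReal_iff]
    have hmap : Tendsto (fun s : ℝ => (s : ℂ)) (𝓝[>] (1:ℝ)) (𝓝[≠] (1:ℂ)) := by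
      rw [tendsto_nhdsWithin_iff]
      constructor
      · exact (Complex.continuous_ofReal.tendsto 1).mono_left nhdsWithin_le_nhds
      · filter_upwards [self_mem_nhdsWithin] with s hs
        simp only [Set.mem_compl_iff, Set.mem_singleton_iff]
        exact_mod_cast ne_of_gt hs
    have T1 : Tendsto (fun s : ℝ => ((s:ℂ) - 1) * riemannZeta s) (𝓝[>] (1:ℝ)) (𝓝 1) :=
      riemannZeta_residue_one.comp hmap
    have T2 : Tendsto (fun s : ℝ => 1 - (2:ℂ) ^ (-(s:ℂ))) (𝓝[>] (1:ℝ)) (𝓝 (1 - 2⁻¹)) := by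
      have hc : ContinuousAt (fun z : ℂ => (2:ℂ) ^ z) (-1) :=
        continuousAt_const_cpow two_ne_zero
      have hneg : Tendsto (fun s : ℝ => -(s:ℂ)) (𝓝[>] (1:ℝ)) (𝓝 (-1)) := by
        have := ((Complex.continuous_ofReal.tendsto 1).mono_left
          (nhdsWithin_le_nhds : 𝓝[>] (1:ℝ) ≤ 𝓝 1)).neg
        simpa using this
      have h2 := hc.tendsto.comp hneg
      have h21 : (2:ℂ) ^ (-1 : ℂ) = 2⁻¹ := by
        rw [Complex.cpow_neg, Complex.cpow_one]
      rw [h21] at h2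
      exact tendsto_const_nhds.sub h2
    have T3 : Tendsto (fun s : ℝ => LSeries (fun n : ℕ => chiC n) (s:ℂ)) (𝓝[>] (1:ℝ))
        (𝓝 ((π/4 : ℝ) : ℂ)) := by
      refine Tendsto.congr' ?_ (Filter.Tendsto.ofReal tendsto_A)
      filter_upwards [self_mem_nhdsWithin] with s _
      exact (LSeries_eq s).symm
    have Tmain := ((T1.mul T2).pow 4).mul (T3.pow 3)
    have hval : ((1 : ℂ) * (1 - 2⁻¹)) ^ 4 * (((π/4 : ℝ)) : ℂ) ^ 3
        = ((((π/4) ^ 3 / 2 ^ 4 : ℝ)) : ℂ) := by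
      push_cast
      ring
    rw [hval] at Tmain
    refine Tendsto.congr' ?_ Tmain
    filter_upwards [self_mem_nhdsWithin] with s hs
    obtain ⟨P, hP, hPC⟩ := hex s hs
    rw [hP.tprod_eq, Complex.ofReal_mul, hPC, Cval]
    push_cast
    ring
end

section
/- Let N(2ⁿ) = #{(x₀,x₁,x₂,x₃) ∈ (ℤ/2ⁿℤ)⁴ : x₀(x₁²+x₂²) ≡ x₃³ (mod 2ⁿ)}. Then lim_{n→∞} N(2ⁿ)/2^{3n} = 2. -/
open Filter Finset

/-! ### Auxiliary counting machinery

We count solutions of `x0*(x1²+x2²) ≡ c·x3³ (mod 2ⁿ)` for `c ∈ {1,2,4}` and establish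
recursions relating the counts for `n+2` to those for `n`. -/

/-- number of `x0 < Q` with `x0*(x1²+x2²) ≡ c*x3³ [MOD Q]` -/
def icnt (Q c x1 x2 x3 : ℕ) : ℕ :=
  ((range Q).filter fun x0 => x0 * (x1 ^ 2 + x2 ^ 2) % Q = c * x3 ^ 3 % Q).card

/-- total count over `(ℤ/2ⁿ)⁴` of `x0(x1²+x2²) ≡ c·x3³` -/
def cnt (c n : ℕ) : ℕ :=
  ∑ x1 ∈ range (2 ^ n), ∑ x2 ∈ range (2 ^ n), ∑ x3 ∈ range (2 ^ n),
    icnt (2 ^ n) c x1 x2 x3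

lemma sum_mod_collapse (g : ℕ → ℕ) (k m T : ℕ) (hT : T = k * m) :
    ∑ a ∈ range T, g (a % m) = k * ∑ i ∈ range m, g i := by
  subst hT
  induction k with
  | zero => simp
  | succ k ih =>
      rw [Nat.succ_mul, Finset.sum_range_add, ih, Nat.succ_mul]
      congr 1
      refine Finset.sum_congr rfl fun x hx => ?_
      rw [show k * m + x = x + m * k by ring, Nat.add_mul_mod_self_left,
        Nat.mod_eq_of_lt (mem_range.mp hx)]

lemma card_filter_mod_collapse (p : ℕ → Prop) [DecidablePred p] (k m T : ℕ) (hT : T = k * m) :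
    ((range T).filter fun x => p (x % m)).card = k * ((range m).filter p).card := by
  rw [Finset.card_filter, Finset.card_filter]
  exact sum_mod_collapse (fun v => if p v then 1 else 0) k m T hT

lemma card_filter_mod_eq (k m a T : ℕ) (hT : T = k * m) (hm : 0 < m) :
    ((range T).filter fun x => x % m = a % m).card = k := by
  rw [card_filter_mod_collapse (fun v => v = a % m) k m T hT, Finset.filter_eq',
    if_pos (mem_range.mpr (Nat.mod_lt a hm))]
  simp

lemma sum_range_two_mul (f : ℕ → ℕ) (h T : ℕ) (hT : T = 2 * h) :
    ∑ x ∈ range T, f x = ∑ a ∈ range h, f (2 * a) + ∑ a ∈ range h, f (2 * a + 1) := by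
  subst hT
  induction h with
  | zero => simp
  | succ h ih =>
      rw [Nat.mul_succ, Finset.sum_range_add, ih,
        Finset.sum_range_succ (fun a => f (2 * a)),
        Finset.sum_range_succ (fun a => f (2 * a + 1))]
      have : ∑ x ∈ range 2, f (2 * h + x) = f (2 * h) + f (2 * h + 1) := by
        simp [Finset.sum_range_succ]
      rw [this]
      ring

/-- the unique solution description of `x0*u ≡ t [MOD 2^k]` for odd `u` -/
lemma odd_mod_inv (k u t : ℕ) (hu : u % 2 = 1) :
    ∃ w, ∀ x0 : ℕ, (x0 * u % 2 ^ k = t % 2 ^ k ↔ x0 % 2 ^ k = w % 2 ^ k) := by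
  rcases Nat.eq_zero_or_pos k with rfl | hk
  · exact ⟨0, fun x0 => by simp [Nat.mod_one]⟩
  have h2k : 1 < 2 ^ k := Nat.one_lt_two_pow_iff.mpr hk.ne'
  have hvex : ∃ v, u * v ≡ 1 [MOD 2 ^ k] := by
    rcases Nat.lt_or_ge u 2 with hu1 | hu2
    · have : u = 1 := by omega
      subst this
      exact ⟨1, Nat.ModEq.refl 1⟩
    · have hcop : Nat.Coprime u (2 ^ k) :=
        Nat.Coprime.pow_right k (Nat.coprime_two_right.mpr (Nat.odd_iff.mpr hu))
      obtain ⟨v, -, hv⟩ := Nat.exists_mul_mod_eq_one_of_coprime hcop h2k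
      refine ⟨v, ?_⟩
      unfold Nat.ModEq
      rw [hv, Nat.mod_eq_of_lt h2k]
  obtain ⟨v, huv⟩ := hvex
  refine ⟨t * v, fun x0 => ?_⟩
  constructor
  · intro h
    have h' : x0 * u ≡ t [MOD 2 ^ k] := h
    calc x0 = x0 * 1 := by ring
      _ ≡ x0 * (u * v) [MOD 2 ^ k] := (huv.symm.mul_left x0)
      _ = (x0 * u) * v := by ring
      _ ≡ t * v [MOD 2 ^ k] := h'.mul_right v
  · intro h
    have h' : x0 ≡ t * v [MOD 2 ^ k] := h
    calc x0 * u ≡ (t * v) * u [MOD 2 ^ k] := h'.mul_right u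
      _ = t * (u * v) := by ring
      _ ≡ t * 1 [MOD 2 ^ k] := huv.mul_left t
      _ = t := by ring

/-- case: `x1² + x2²` odd — exactly one `x0` -/
lemma icnt_odd (Q k c x1 x2 x3 : ℕ) (hQ : Q = 2 ^ k) (h : (x1 ^ 2 + x2 ^ 2) % 2 = 1) :
    icnt Q c x1 x2 x3 = 1 := by
  subst hQ
  obtain ⟨w, hw⟩ := odd_mod_inv k (x1 ^ 2 + x2 ^ 2) (c * x3 ^ 3) h
  unfold icnt
  rw [Finset.filter_congr (fun x _ => hw x)]
  exact card_filter_mod_eq 1 (2 ^ k) w (2 ^ k) (by ring) (Nat.two_pow_pos k)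

/-- case: `x1, x2` both odd — `2` or `0` solutions for `x0` -/
lemma icnt_two (Q k c x1 x2 x3 : ℕ) (hQ : Q = 2 ^ (k + 1)) (h1 : x1 % 2 = 1) (h2 : x2 % 2 = 1) :
    icnt Q c x1 x2 x3 = if c * x3 ^ 3 % 2 = 0 then 2 else 0 := by
  subst hQ
  obtain ⟨a, rfl⟩ : ∃ a, x1 = 2 * a + 1 := ⟨x1 / 2, by omega⟩
  obtain ⟨b, rfl⟩ : ∃ b, x2 = 2 * b + 1 := ⟨x2 / 2, by omega⟩
  have hs : (2 * a + 1) ^ 2 + (2 * b + 1) ^ 2 = 2 * (2 * (a ^ 2 + a + b ^ 2 + b) + 1) := by ring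
  have hu : (2 * (a ^ 2 + a + b ^ 2 + b) + 1) % 2 = 1 := by omega
  split
  case isTrue ht =>
    obtain ⟨t', ht'⟩ : ∃ t', c * x3 ^ 3 = 2 * t' := ⟨c * x3 ^ 3 / 2, by omega⟩
    obtain ⟨w, hw⟩ := odd_mod_inv k (2 * (a ^ 2 + a + b ^ 2 + b) + 1) t' hu
    unfold icnt
    have key : ∀ x0 : ℕ, (x0 * ((2 * a + 1) ^ 2 + (2 * b + 1) ^ 2) % 2 ^ (k + 1)
        = c * x3 ^ 3 % 2 ^ (k + 1)) ↔ (x0 % 2 ^ k = w % 2 ^ k) := by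
      intro x0
      rw [← hw x0]
      have e1 : x0 * ((2 * a + 1) ^ 2 + (2 * b + 1) ^ 2)
          = 2 * (x0 * (2 * (a ^ 2 + a + b ^ 2 + b) + 1)) := by rw [hs]; ring
      rw [e1, ht']
      show (2 * (x0 * _) ≡ 2 * t' [MOD 2 ^ (k + 1)]) ↔ _
      rw [pow_succ, mul_comm (2 ^ k) 2]
      exact Nat.ModEq.mul_left_cancel_iff' (by norm_num)
    rw [Finset.filter_congr (fun x _ => key x)]
    exact card_filter_mod_eq 2 (2 ^ k) w (2 ^ (k + 1)) (by ring) (Nat.two_pow_pos k)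
  case isFalse ht =>
    unfold icnt
    rw [Finset.card_eq_zero, Finset.filter_eq_empty_iff]
    intro x0 _ hcon
    have hmod : x0 * ((2 * a + 1) ^ 2 + (2 * b + 1) ^ 2) ≡ c * x3 ^ 3 [MOD 2] :=
      Nat.ModEq.of_dvd (dvd_pow_self 2 (Nat.succ_ne_zero k)) hcon
    have h2 : c * x3 ^ 3 % 2 = x0 * ((2 * a + 1) ^ 2 + (2 * b + 1) ^ 2) % 2 := hmod.symm
    have e2 : x0 * ((2 * a + 1) ^ 2 + (2 * b + 1) ^ 2)
        = 2 * (x0 * (2 * (a ^ 2 + a + b ^ 2 + b) + 1)) := by ring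
    rw [e2] at h2
    omega

/-- invariance of the inner count under reduction of `x1, x2, x3` mod `Q` -/
lemma icnt_mod (Q c x1 x2 x3 : ℕ) :
    icnt Q c x1 x2 x3 = icnt Q c (x1 % Q) (x2 % Q) (x3 % Q) := by
  unfold icnt
  apply congrArg
  apply Finset.filter_congr
  intro x0 _
  constructor
  · intro h
    calc x0 * ((x1 % Q) ^ 2 + (x2 % Q) ^ 2)
        ≡ x0 * (x1 ^ 2 + x2 ^ 2) [MOD Q] :=
          Nat.ModEq.mul_left x0 (((Nat.mod_modEq x1 Q).pow 2).add ((Nat.mod_modEq x2 Q).pow 2))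
      _ ≡ c * x3 ^ 3 [MOD Q] := h
      _ ≡ c * (x3 % Q) ^ 3 [MOD Q] := Nat.ModEq.mul_left c ((Nat.mod_modEq x3 Q).symm.pow 3)
  · intro h
    calc x0 * (x1 ^ 2 + x2 ^ 2)
        ≡ x0 * ((x1 % Q) ^ 2 + (x2 % Q) ^ 2) [MOD Q] :=
          Nat.ModEq.mul_left x0
            (((Nat.mod_modEq x1 Q).symm.pow 2).add ((Nat.mod_modEq x2 Q).symm.pow 2))
      _ ≡ c * (x3 % Q) ^ 3 [MOD Q] := h
      _ ≡ c * x3 ^ 3 [MOD Q] := Nat.ModEq.mul_left c ((Nat.mod_modEq x3 Q).pow 3)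

/-- even-even case: dividing the congruence by `4` -/
lemma icnt_ee_general (Q r c c' : ℕ) (hQ : Q = 4 * r) (a b x3 y : ℕ)
    (he : c * x3 ^ 3 = 4 * (c' * y ^ 3)) :
    icnt Q c (2 * a) (2 * b) x3 = 4 * icnt r c' a b y := by
  subst hQ
  unfold icnt
  have key : ∀ x0 : ℕ, (x0 * ((2 * a) ^ 2 + (2 * b) ^ 2) % (4 * r) = c * x3 ^ 3 % (4 * r))
      ↔ ((x0 % r) * (a ^ 2 + b ^ 2) % r = c' * y ^ 3 % r) := by
    intro x0
    have e1 : x0 * ((2 * a) ^ 2 + (2 * b) ^ 2) = 4 * (x0 * (a ^ 2 + b ^ 2)) := by ring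
    rw [e1, he]
    show (4 * (x0 * (a ^ 2 + b ^ 2)) ≡ 4 * (c' * y ^ 3) [MOD 4 * r]) ↔ _
    rw [Nat.ModEq.mul_left_cancel_iff' (by norm_num : (4:ℕ) ≠ 0)]
    constructor
    · intro h
      calc (x0 % r) * (a ^ 2 + b ^ 2) ≡ x0 * (a ^ 2 + b ^ 2) [MOD r] :=
            (Nat.mod_modEq x0 r).mul_right _
        _ ≡ c' * y ^ 3 [MOD r] := h
    · intro h
      calc x0 * (a ^ 2 + b ^ 2) ≡ (x0 % r) * (a ^ 2 + b ^ 2) [MOD r] :=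
            (Nat.mod_modEq x0 r).symm.mul_right _
        _ ≡ c' * y ^ 3 [MOD r] := h
  rw [Finset.filter_congr (fun x _ => key x)]
  exact card_filter_mod_collapse (fun v => v * (a ^ 2 + b ^ 2) % r = c' * y ^ 3 % r) 4 r (4 * r) rfl

/-- even-even case with `c·x3³ ≢ 0 mod 4`: no solutions -/
lemma icnt_ee_kill (Q r c : ℕ) (hQ : Q = 4 * r) (a b x3 : ℕ)
    (h4 : c * x3 ^ 3 % 4 ≠ 0) : icnt Q c (2 * a) (2 * b) x3 = 0 := by
  subst hQ
  unfold icnt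
  rw [Finset.card_eq_zero, Finset.filter_eq_empty_iff]
  intro x0 _ hcon
  have hmod : x0 * ((2 * a) ^ 2 + (2 * b) ^ 2) ≡ c * x3 ^ 3 [MOD 4] :=
    Nat.ModEq.of_dvd ⟨r, rfl⟩ hcon
  have e1 : x0 * ((2 * a) ^ 2 + (2 * b) ^ 2) = 4 * (x0 * (a ^ 2 + b ^ 2)) := by ring
  have h2 : c * x3 ^ 3 % 4 = 4 * (x0 * (a ^ 2 + b ^ 2)) % 4 := by rw [← e1]; exact hmod.symm
  omega

/-- splitting a double sum over `range (2h)` by parities -/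
lemma split4 (G : ℕ → ℕ → ℕ) (h T : ℕ) (hT : T = 2 * h) :
    ∑ x1 ∈ range T, ∑ x2 ∈ range T, G x1 x2
    = ((∑ a ∈ range h, ∑ b ∈ range h, G (2 * a) (2 * b))
      + ∑ a ∈ range h, ∑ b ∈ range h, G (2 * a) (2 * b + 1))
    + ((∑ a ∈ range h, ∑ b ∈ range h, G (2 * a + 1) (2 * b))
      + ∑ a ∈ range h, ∑ b ∈ range h, G (2 * a + 1) (2 * b + 1)) := by
  have e1 : ∀ x1, ∑ x2 ∈ range T, G x1 x2
      = (∑ b ∈ range h, G x1 (2 * b)) + ∑ b ∈ range h, G x1 (2 * b + 1) :=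
    fun x1 => sum_range_two_mul (fun x2 => G x1 x2) h T hT
  calc ∑ x1 ∈ range T, ∑ x2 ∈ range T, G x1 x2
      = (∑ a ∈ range h, ∑ x2 ∈ range T, G (2 * a) x2)
        + ∑ a ∈ range h, ∑ x2 ∈ range T, G (2 * a + 1) x2 :=
        sum_range_two_mul (fun x1 => ∑ x2 ∈ range T, G x1 x2) h T hT
    _ = (∑ a ∈ range h, ((∑ b ∈ range h, G (2 * a) (2 * b)) + ∑ b ∈ range h, G (2 * a) (2 * b + 1)))
        + ∑ a ∈ range h, ((∑ b ∈ range h, G (2 * a + 1) (2 * b))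
          + ∑ b ∈ range h, G (2 * a + 1) (2 * b + 1)) := by
        rw [Finset.sum_congr rfl fun a _ => e1 (2 * a),
          Finset.sum_congr rfl fun a _ => e1 (2 * a + 1)]
    _ = _ := by rw [Finset.sum_add_distrib, Finset.sum_add_distrib]

/-- collapsing a triple sum of a mod-`r`-invariant function -/
lemma triple_collapse (F : ℕ → ℕ → ℕ → ℕ) (r T1 T2 T3 k1 k2 k3 : ℕ)
    (h1 : T1 = k1 * r) (h2 : T2 = k2 * r) (h3 : T3 = k3 * r)
    (Hinv : ∀ a b c, F a b c = F (a % r) (b % r) (c % r)) :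
    ∑ a ∈ range T1, ∑ b ∈ range T2, ∑ c ∈ range T3, F a b c
    = k1 * k2 * k3 * ∑ y1 ∈ range r, ∑ y2 ∈ range r, ∑ y3 ∈ range r, F y1 y2 y3 := by
  calc ∑ a ∈ range T1, ∑ b ∈ range T2, ∑ c ∈ range T3, F a b c
      = ∑ a ∈ range T1, ∑ b ∈ range T2, ∑ c ∈ range T3, F (a % r) (b % r) (c % r) := by
        refine Finset.sum_congr rfl fun a _ => Finset.sum_congr rfl fun b _ =>
          Finset.sum_congr rfl fun c _ => Hinv a b c
    _ = ∑ a ∈ range T1, ∑ b ∈ range T2, k3 * ∑ y3 ∈ range r, F (a % r) (b % r) y3 := by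
        refine Finset.sum_congr rfl fun a _ => Finset.sum_congr rfl fun b _ => ?_
        exact sum_mod_collapse (fun y3 => F (a % r) (b % r) y3) k3 r T3 h3
    _ = ∑ a ∈ range T1, k2 * ∑ y2 ∈ range r, (k3 * ∑ y3 ∈ range r, F (a % r) y2 y3) := by
        refine Finset.sum_congr rfl fun a _ => ?_
        exact sum_mod_collapse (fun b => k3 * ∑ y3 ∈ range r, F (a % r) b y3) k2 r T2 h2
    _ = k1 * ∑ y1 ∈ range r, (k2 * ∑ y2 ∈ range r, (k3 * ∑ y3 ∈ range r, F y1 y2 y3)) :=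
        sum_mod_collapse
          (fun a => k2 * ∑ y2 ∈ range r, (k3 * ∑ y3 ∈ range r, F a y2 y3)) k1 r T1 h1
    _ = k1 * k2 * k3 * ∑ y1 ∈ range r, ∑ y2 ∈ range r, ∑ y3 ∈ range r, F y1 y2 y3 := by
        simp only [← Finset.mul_sum]
        ring

/-- the recursion for `c = 4` -/
lemma cnt4_rec (n : ℕ) : cnt 4 (n + 2) = 2 ^ (3 * n + 6) + 64 * cnt 1 n := by
  unfold cnt
  simp only [split4 (fun x1 x2 => ∑ x3 ∈ range (2 ^ (n + 2)), icnt (2 ^ (n + 2)) 4 x1 x2 x3)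
    (2 ^ (n + 1)) (2 ^ (n + 2)) (by ring)]
  have hEE : ∑ a ∈ range (2 ^ (n + 1)), ∑ b ∈ range (2 ^ (n + 1)),
      ∑ x3 ∈ range (2 ^ (n + 2)), icnt (2 ^ (n + 2)) 4 (2 * a) (2 * b) x3 = 64 * cnt 1 n := by
    calc ∑ a ∈ range (2 ^ (n + 1)), ∑ b ∈ range (2 ^ (n + 1)),
        ∑ x3 ∈ range (2 ^ (n + 2)), icnt (2 ^ (n + 2)) 4 (2 * a) (2 * b) x3
        = ∑ a ∈ range (2 ^ (n + 1)), ∑ b ∈ range (2 ^ (n + 1)),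
          ∑ x3 ∈ range (2 ^ (n + 2)), 4 * icnt (2 ^ n) 1 a b x3 := by
          refine Finset.sum_congr rfl fun a _ => Finset.sum_congr rfl fun b _ =>
            Finset.sum_congr rfl fun x3 _ => ?_
          exact icnt_ee_general (2 ^ (n + 2)) (2 ^ n) 4 1 (by ring) a b x3 x3 (by ring)
      _ = 2 * 2 * 4 * ∑ y1 ∈ range (2 ^ n), ∑ y2 ∈ range (2 ^ n), ∑ y3 ∈ range (2 ^ n),
          4 * icnt (2 ^ n) 1 y1 y2 y3 := by
          refine triple_collapse (fun a b c => 4 * icnt (2 ^ n) 1 a b c) (2 ^ n) _ _ _ 2 2 4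
            (by ring) (by ring) (by ring) fun a b c => ?_
          show 4 * icnt _ _ a b c = 4 * icnt _ _ (a % 2 ^ n) (b % 2 ^ n) (c % 2 ^ n)
          rw [icnt_mod]
      _ = 64 * cnt 1 n := by
          unfold cnt
          simp only [← Finset.mul_sum]
          try ring
  have hc : ∀ a b x3 : ℕ, icnt (2 ^ (n + 2)) 4 (2 * a) (2 * b + 1) x3 = 1 := by
    intro a b x3
    refine icnt_odd _ (n + 2) _ _ _ _ rfl ?_
    have : (2 * a) ^ 2 + (2 * b + 1) ^ 2 = 2 * (2 * a ^ 2 + 2 * b ^ 2 + 2 * b) + 1 := by ring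
    omega
  have hc' : ∀ a b x3 : ℕ, icnt (2 ^ (n + 2)) 4 (2 * a + 1) (2 * b) x3 = 1 := by
    intro a b x3
    refine icnt_odd _ (n + 2) _ _ _ _ rfl ?_
    have : (2 * a + 1) ^ 2 + (2 * b) ^ 2 = 2 * (2 * a ^ 2 + 2 * a + 2 * b ^ 2) + 1 := by ring
    omega
  have hoo : ∀ a b x3 : ℕ, icnt (2 ^ (n + 2)) 4 (2 * a + 1) (2 * b + 1) x3 = 2 := by
    intro a b x3
    rw [icnt_two _ (n + 1) _ _ _ _ rfl (by omega) (by omega)]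
    have : 4 * x3 ^ 3 % 2 = 0 := by omega
    rw [if_pos this]
  have hEO : ∑ a ∈ range (2 ^ (n + 1)), ∑ b ∈ range (2 ^ (n + 1)),
      ∑ x3 ∈ range (2 ^ (n + 2)), icnt (2 ^ (n + 2)) 4 (2 * a) (2 * b + 1) x3
      = 2 ^ (n + 1) * (2 ^ (n + 1) * 2 ^ (n + 2)) := by
    simp only [hc]
    simp [Finset.sum_const, Finset.card_range]
  have hOE : ∑ a ∈ range (2 ^ (n + 1)), ∑ b ∈ range (2 ^ (n + 1)),
      ∑ x3 ∈ range (2 ^ (n + 2)), icnt (2 ^ (n + 2)) 4 (2 * a + 1) (2 * b) x3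
      = 2 ^ (n + 1) * (2 ^ (n + 1) * 2 ^ (n + 2)) := by
    simp only [hc']
    simp [Finset.sum_const, Finset.card_range]
  have hOO : ∑ a ∈ range (2 ^ (n + 1)), ∑ b ∈ range (2 ^ (n + 1)),
      ∑ x3 ∈ range (2 ^ (n + 2)), icnt (2 ^ (n + 2)) 4 (2 * a + 1) (2 * b + 1) x3
      = 2 ^ (n + 1) * (2 ^ (n + 1) * (2 ^ (n + 2) * 2)) := by
    simp only [hoo]
    simp [Finset.sum_const, Finset.card_range]
    try ring
  rw [hEE, hEO, hOE, hOO]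
  unfold cnt
  ring

/-- the recursion for `c = 2` -/
lemma cnt2_rec (n : ℕ) : cnt 2 (n + 2) = 2 ^ (3 * n + 6) + 32 * cnt 4 n := by
  unfold cnt
  simp only [split4 (fun x1 x2 => ∑ x3 ∈ range (2 ^ (n + 2)), icnt (2 ^ (n + 2)) 2 x1 x2 x3)
    (2 ^ (n + 1)) (2 ^ (n + 2)) (by ring)]
  have hEE : ∑ a ∈ range (2 ^ (n + 1)), ∑ b ∈ range (2 ^ (n + 1)),
      ∑ x3 ∈ range (2 ^ (n + 2)), icnt (2 ^ (n + 2)) 2 (2 * a) (2 * b) x3 = 32 * cnt 4 n := by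
    have hx3split : ∀ a b : ℕ, ∑ x3 ∈ range (2 ^ (n + 2)), icnt (2 ^ (n + 2)) 2 (2 * a) (2 * b) x3
        = ∑ y ∈ range (2 ^ (n + 1)), 4 * icnt (2 ^ n) 4 a b y := by
      intro a b
      simp only [sum_range_two_mul (fun x3 => icnt (2 ^ (n + 2)) 2 (2 * a) (2 * b) x3)
        (2 ^ (n + 1)) (2 ^ (n + 2)) (by ring)]
      have he : ∀ y : ℕ, icnt (2 ^ (n + 2)) 2 (2 * a) (2 * b) (2 * y)
          = 4 * icnt (2 ^ n) 4 a b y :=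
        fun y => icnt_ee_general (2 ^ (n + 2)) (2 ^ n) 2 4 (by ring) a b (2 * y) y (by ring)
      have hk : ∀ y : ℕ, icnt (2 ^ (n + 2)) 2 (2 * a) (2 * b) (2 * y + 1) = 0 := by
        intro y
        refine icnt_ee_kill (2 ^ (n + 2)) (2 ^ n) 2 (by ring) a b (2 * y + 1) ?_
        have : 2 * (2 * y + 1) ^ 3 = 4 * (4 * y ^ 3 + 6 * y ^ 2 + 3 * y) + 2 := by ring
        omega
      rw [Finset.sum_congr rfl fun y _ => he y, Finset.sum_congr rfl fun y _ => hk y]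
      simp
    calc ∑ a ∈ range (2 ^ (n + 1)), ∑ b ∈ range (2 ^ (n + 1)),
        ∑ x3 ∈ range (2 ^ (n + 2)), icnt (2 ^ (n + 2)) 2 (2 * a) (2 * b) x3
        = ∑ a ∈ range (2 ^ (n + 1)), ∑ b ∈ range (2 ^ (n + 1)),
          ∑ y ∈ range (2 ^ (n + 1)), 4 * icnt (2 ^ n) 4 a b y := by
          exact Finset.sum_congr rfl fun a _ => Finset.sum_congr rfl fun b _ => hx3split a b
      _ = 2 * 2 * 2 * ∑ y1 ∈ range (2 ^ n), ∑ y2 ∈ range (2 ^ n), ∑ y3 ∈ range (2 ^ n),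
          4 * icnt (2 ^ n) 4 y1 y2 y3 := by
          refine triple_collapse (fun a b c => 4 * icnt (2 ^ n) 4 a b c) (2 ^ n) _ _ _ 2 2 2
            (by ring) (by ring) (by ring) fun a b c => ?_
          show 4 * icnt _ _ a b c = 4 * icnt _ _ (a % 2 ^ n) (b % 2 ^ n) (c % 2 ^ n)
          rw [icnt_mod]
      _ = 32 * cnt 4 n := by
          unfold cnt
          simp only [← Finset.mul_sum]
          try ring
  have hc : ∀ a b x3 : ℕ, icnt (2 ^ (n + 2)) 2 (2 * a) (2 * b + 1) x3 = 1 := by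
    intro a b x3
    refine icnt_odd _ (n + 2) _ _ _ _ rfl ?_
    have : (2 * a) ^ 2 + (2 * b + 1) ^ 2 = 2 * (2 * a ^ 2 + 2 * b ^ 2 + 2 * b) + 1 := by ring
    omega
  have hc' : ∀ a b x3 : ℕ, icnt (2 ^ (n + 2)) 2 (2 * a + 1) (2 * b) x3 = 1 := by
    intro a b x3
    refine icnt_odd _ (n + 2) _ _ _ _ rfl ?_
    have : (2 * a + 1) ^ 2 + (2 * b) ^ 2 = 2 * (2 * a ^ 2 + 2 * a + 2 * b ^ 2) + 1 := by ring
    omega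
  have hoo : ∀ a b x3 : ℕ, icnt (2 ^ (n + 2)) 2 (2 * a + 1) (2 * b + 1) x3 = 2 := by
    intro a b x3
    rw [icnt_two _ (n + 1) _ _ _ _ rfl (by omega) (by omega)]
    have : 2 * x3 ^ 3 % 2 = 0 := by omega
    rw [if_pos this]
  have hEO : ∑ a ∈ range (2 ^ (n + 1)), ∑ b ∈ range (2 ^ (n + 1)),
      ∑ x3 ∈ range (2 ^ (n + 2)), icnt (2 ^ (n + 2)) 2 (2 * a) (2 * b + 1) x3
      = 2 ^ (n + 1) * (2 ^ (n + 1) * 2 ^ (n + 2)) := by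
    simp only [hc]
    simp [Finset.sum_const, Finset.card_range]
  have hOE : ∑ a ∈ range (2 ^ (n + 1)), ∑ b ∈ range (2 ^ (n + 1)),
      ∑ x3 ∈ range (2 ^ (n + 2)), icnt (2 ^ (n + 2)) 2 (2 * a + 1) (2 * b) x3
      = 2 ^ (n + 1) * (2 ^ (n + 1) * 2 ^ (n + 2)) := by
    simp only [hc']
    simp [Finset.sum_const, Finset.card_range]
  have hOO : ∑ a ∈ range (2 ^ (n + 1)), ∑ b ∈ range (2 ^ (n + 1)),
      ∑ x3 ∈ range (2 ^ (n + 2)), icnt (2 ^ (n + 2)) 2 (2 * a + 1) (2 * b + 1) x3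
      = 2 ^ (n + 1) * (2 ^ (n + 1) * (2 ^ (n + 2) * 2)) := by
    simp only [hoo]
    simp [Finset.sum_const, Finset.card_range]
    try ring
  rw [hEE, hEO, hOE, hOO]
  unfold cnt
  ring

/-- the recursion for `c = 1` -/
lemma cnt1_rec (n : ℕ) : cnt 1 (n + 2) = 2 ^ (3 * n + 5) + 2 ^ (3 * n + 4) + 32 * cnt 2 n := by
  unfold cnt
  simp only [split4 (fun x1 x2 => ∑ x3 ∈ range (2 ^ (n + 2)), icnt (2 ^ (n + 2)) 1 x1 x2 x3)
    (2 ^ (n + 1)) (2 ^ (n + 2)) (by ring)]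
  have hEE : ∑ a ∈ range (2 ^ (n + 1)), ∑ b ∈ range (2 ^ (n + 1)),
      ∑ x3 ∈ range (2 ^ (n + 2)), icnt (2 ^ (n + 2)) 1 (2 * a) (2 * b) x3 = 32 * cnt 2 n := by
    have hx3split : ∀ a b : ℕ, ∑ x3 ∈ range (2 ^ (n + 2)), icnt (2 ^ (n + 2)) 1 (2 * a) (2 * b) x3
        = ∑ y ∈ range (2 ^ (n + 1)), 4 * icnt (2 ^ n) 2 a b y := by
      intro a b
      simp only [sum_range_two_mul (fun x3 => icnt (2 ^ (n + 2)) 1 (2 * a) (2 * b) x3)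
        (2 ^ (n + 1)) (2 ^ (n + 2)) (by ring)]
      have he : ∀ y : ℕ, icnt (2 ^ (n + 2)) 1 (2 * a) (2 * b) (2 * y)
          = 4 * icnt (2 ^ n) 2 a b y :=
        fun y => icnt_ee_general (2 ^ (n + 2)) (2 ^ n) 1 2 (by ring) a b (2 * y) y (by ring)
      have hk : ∀ y : ℕ, icnt (2 ^ (n + 2)) 1 (2 * a) (2 * b) (2 * y + 1) = 0 := by
        intro y
        refine icnt_ee_kill (2 ^ (n + 2)) (2 ^ n) 1 (by ring) a b (2 * y + 1) ?_
        have : 1 * (2 * y + 1) ^ 3 = 2 * (4 * y ^ 3 + 6 * y ^ 2 + 3 * y) + 1 := by ring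
        omega
      rw [Finset.sum_congr rfl fun y _ => he y, Finset.sum_congr rfl fun y _ => hk y]
      simp
    calc ∑ a ∈ range (2 ^ (n + 1)), ∑ b ∈ range (2 ^ (n + 1)),
        ∑ x3 ∈ range (2 ^ (n + 2)), icnt (2 ^ (n + 2)) 1 (2 * a) (2 * b) x3
        = ∑ a ∈ range (2 ^ (n + 1)), ∑ b ∈ range (2 ^ (n + 1)),
          ∑ y ∈ range (2 ^ (n + 1)), 4 * icnt (2 ^ n) 2 a b y := by
          exact Finset.sum_congr rfl fun a _ => Finset.sum_congr rfl fun b _ => hx3split a b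
      _ = 2 * 2 * 2 * ∑ y1 ∈ range (2 ^ n), ∑ y2 ∈ range (2 ^ n), ∑ y3 ∈ range (2 ^ n),
          4 * icnt (2 ^ n) 2 y1 y2 y3 := by
          refine triple_collapse (fun a b c => 4 * icnt (2 ^ n) 2 a b c) (2 ^ n) _ _ _ 2 2 2
            (by ring) (by ring) (by ring) fun a b c => ?_
          show 4 * icnt _ _ a b c = 4 * icnt _ _ (a % 2 ^ n) (b % 2 ^ n) (c % 2 ^ n)
          rw [icnt_mod]
      _ = 32 * cnt 2 n := by
          unfold cnt
          simp only [← Finset.mul_sum]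
          try ring
  have hc : ∀ a b x3 : ℕ, icnt (2 ^ (n + 2)) 1 (2 * a) (2 * b + 1) x3 = 1 := by
    intro a b x3
    refine icnt_odd _ (n + 2) _ _ _ _ rfl ?_
    have : (2 * a) ^ 2 + (2 * b + 1) ^ 2 = 2 * (2 * a ^ 2 + 2 * b ^ 2 + 2 * b) + 1 := by ring
    omega
  have hc' : ∀ a b x3 : ℕ, icnt (2 ^ (n + 2)) 1 (2 * a + 1) (2 * b) x3 = 1 := by
    intro a b x3
    refine icnt_odd _ (n + 2) _ _ _ _ rfl ?_
    have : (2 * a + 1) ^ 2 + (2 * b) ^ 2 = 2 * (2 * a ^ 2 + 2 * a + 2 * b ^ 2) + 1 := by ring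
    omega
  have hEO : ∑ a ∈ range (2 ^ (n + 1)), ∑ b ∈ range (2 ^ (n + 1)),
      ∑ x3 ∈ range (2 ^ (n + 2)), icnt (2 ^ (n + 2)) 1 (2 * a) (2 * b + 1) x3
      = 2 ^ (n + 1) * (2 ^ (n + 1) * 2 ^ (n + 2)) := by
    simp only [hc]
    simp [Finset.sum_const, Finset.card_range]
  have hOE : ∑ a ∈ range (2 ^ (n + 1)), ∑ b ∈ range (2 ^ (n + 1)),
      ∑ x3 ∈ range (2 ^ (n + 2)), icnt (2 ^ (n + 2)) 1 (2 * a + 1) (2 * b) x3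
      = 2 ^ (n + 1) * (2 ^ (n + 1) * 2 ^ (n + 2)) := by
    simp only [hc']
    simp [Finset.sum_const, Finset.card_range]
  have hOO : ∑ a ∈ range (2 ^ (n + 1)), ∑ b ∈ range (2 ^ (n + 1)),
      ∑ x3 ∈ range (2 ^ (n + 2)), icnt (2 ^ (n + 2)) 1 (2 * a + 1) (2 * b + 1) x3
      = 2 ^ (n + 1) * (2 ^ (n + 1) * (2 ^ (n + 1) * 2)) := by
    have hx3 : ∀ a b : ℕ,
        ∑ x3 ∈ range (2 ^ (n + 2)), icnt (2 ^ (n + 2)) 1 (2 * a + 1) (2 * b + 1) x3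
        = 2 ^ (n + 1) * 2 := by
      intro a b
      have hval : ∀ x3 : ℕ, icnt (2 ^ (n + 2)) 1 (2 * a + 1) (2 * b + 1) x3
          = if 1 * x3 ^ 3 % 2 = 0 then 2 else 0 :=
        fun x3 => icnt_two _ (n + 1) _ _ _ _ rfl (by omega) (by omega)
      rw [Finset.sum_congr rfl fun x3 _ => hval x3]
      simp only [sum_range_two_mul (fun x3 => if 1 * x3 ^ 3 % 2 = 0 then 2 else 0)
        (2 ^ (n + 1)) (2 ^ (n + 2)) (by ring)]
      have heven : ∀ y : ℕ, (if 1 * (2 * y) ^ 3 % 2 = 0 then 2 else 0) = 2 := by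
        intro y
        have : 1 * (2 * y) ^ 3 = 2 * (4 * y ^ 3) := by ring
        rw [if_pos (by omega)]
      have hodd : ∀ y : ℕ, (if 1 * (2 * y + 1) ^ 3 % 2 = 0 then 2 else 0) = 0 := by
        intro y
        have : 1 * (2 * y + 1) ^ 3 = 2 * (4 * y ^ 3 + 6 * y ^ 2 + 3 * y) + 1 := by ring
        rw [if_neg (by omega)]
      rw [Finset.sum_congr rfl fun y _ => heven y, Finset.sum_congr rfl fun y _ => hodd y]
      simp [Finset.sum_const, Finset.card_range, mul_comm]
    rw [Finset.sum_congr rfl fun a _ => Finset.sum_congr rfl fun b _ => hx3 a b]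
    simp [Finset.sum_const, Finset.card_range, mul_comm, mul_assoc]
  rw [hEE, hEO, hOE, hOO]
  unfold cnt
  ring

/-! ### Bridge to `N2` -/

/-- The number of solutions of `x₀(x₁²+x₂²) ≡ x₃³ (mod 2ⁿ)`. -/
noncomputable def N2 (n : ℕ) : ℕ :=
  Nat.card {x : ZMod (2 ^ n) × ZMod (2 ^ n) × ZMod (2 ^ n) × ZMod (2 ^ n) //
    x.1 * (x.2.1 ^ 2 + x.2.2.1 ^ 2) = x.2.2.2 ^ 3}

lemma sum_zmod (q : ℕ) [NeZero q] (f : ZMod q → ℕ) :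
    ∑ x : ZMod q, f x = ∑ y ∈ range q, f (y : ZMod q) := by
  refine Finset.sum_nbij' (fun x : ZMod q => x.val) (fun y : ℕ => (y : ZMod q))
    (fun x _ => mem_range.mpr (ZMod.val_lt x)) (fun y _ => mem_univ _)
    (fun x _ => ZMod.natCast_rightInverse x) (fun y hy => ZMod.val_cast_of_lt (mem_range.mp hy))
    (fun x _ => by rw [ZMod.natCast_rightInverse x])

lemma N2_eq_cnt (n : ℕ) : N2 n = cnt 1 n := by
  haveI : NeZero (2 ^ n) := ⟨(Nat.two_pow_pos n).ne'⟩
  classical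
  rw [N2, Nat.card_eq_fintype_card, Fintype.card_subtype, Finset.card_filter]
  simp only [Fintype.sum_prod_type]
  rw [Finset.sum_comm]
  refine Eq.trans (Finset.sum_congr rfl fun x1 _ => Finset.sum_comm) ?_
  refine Eq.trans (Finset.sum_congr rfl fun x1 _ =>
    Finset.sum_congr rfl fun x2 _ => Finset.sum_comm) ?_
  simp only [sum_zmod]
  unfold cnt icnt
  refine Finset.sum_congr rfl fun y1 _ => Finset.sum_congr rfl fun y2 _ =>
    Finset.sum_congr rfl fun y3 _ => ?_
  rw [Finset.card_filter]
  refine Finset.sum_congr rfl fun y0 _ => ?_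
  have hiff : ((y0 : ZMod (2 ^ n)) * ((y1 : ZMod (2 ^ n)) ^ 2 + (y2 : ZMod (2 ^ n)) ^ 2)
      = (y3 : ZMod (2 ^ n)) ^ 3)
      ↔ (y0 * (y1 ^ 2 + y2 ^ 2) % 2 ^ n = 1 * y3 ^ 3 % 2 ^ n) := by
    rw [one_mul, ← ZMod.natCast_eq_natCast_iff']
    push_cast
    rfl
  rw [if_congr hiff rfl rfl]

/-! ### Base values -/

lemma cnt_two_zero : cnt 2 0 = 1 := by decide
lemma cnt_four_zero : cnt 4 0 = 1 := by decide
lemma cnt_one_zero : cnt 1 0 = 1 := by decide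
lemma cnt_one_one : cnt 1 1 = 8 := by decide
lemma cnt_two_one : cnt 2 1 = 12 := by decide
lemma cnt_four_one : cnt 4 1 = 12 := by decide

lemma N2_0 : N2 0 = 1 := by rw [N2_eq_cnt, cnt_one_zero]
lemma N2_1 : N2 1 = 8 := by rw [N2_eq_cnt, cnt_one_one]
lemma N2_2 : N2 2 = 80 := by
  have h := cnt1_rec 0
  norm_num [cnt_two_zero] at h
  rw [N2_eq_cnt, h]
lemma N2_3 : N2 3 = 768 := by
  have h := cnt1_rec 1
  norm_num [cnt_two_one] at h
  rw [N2_eq_cnt, h]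
lemma N2_4 : N2 4 = 6144 := by
  have h2 := cnt2_rec 0
  norm_num [cnt_four_zero] at h2
  have h := cnt1_rec 2
  norm_num [h2] at h
  rw [N2_eq_cnt, h]
lemma N2_5 : N2 5 = 53248 := by
  have h2 := cnt2_rec 1
  norm_num [cnt_four_one] at h2
  have h := cnt1_rec 3
  norm_num [h2] at h
  rw [N2_eq_cnt, h]

/-- The combined recursion with period 6. -/
lemma N2_rec (n : ℕ) : N2 (n + 6) = 3 * 2 ^ (3 * n + 17) + 2 ^ 16 * N2 n := by
  rw [N2_eq_cnt, N2_eq_cnt]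
  have h1 := cnt1_rec (n + 4)
  have h2 := cnt2_rec (n + 2)
  have h4 := cnt4_rec n
  rw [show n + 6 = (n + 4) + 2 from by omega] at *
  rw [h1, show n + 4 = (n + 2) + 2 from by omega, h2, h4]
  ring

/-! ### The limit -/

lemma N2_bound (n : ℕ) : 0 ≤ 2 - (N2 n : ℝ) / 2 ^ (3 * n)
    ∧ 2 - (N2 n : ℝ) / 2 ^ (3 * n) ≤ (1 / 4) ^ (n / 6) := by
  induction n using Nat.strong_induction_on with
  | _ n ih =>
    match n, ih with
    | 0, _ => rw [N2_0]; norm_num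
    | 1, _ => rw [N2_1]; norm_num
    | 2, _ => rw [N2_2]; norm_num
    | 3, _ => rw [N2_3]; norm_num
    | 4, _ => rw [N2_4]; norm_num
    | 5, _ => rw [N2_5]; norm_num
    | (m + 6), ih =>
      obtain ⟨h0, h1⟩ := ih m (by omega)
      have hval : (N2 (m + 6) : ℝ) / 2 ^ (3 * (m + 6))
          = 3 / 2 + ((N2 m : ℝ) / 2 ^ (3 * m)) / 4 := by
        rw [N2_rec m]
        push_cast
        rw [show 3 * (m + 6) = (3 * m + 17) + 1 by ring, pow_add, pow_add, pow_add]
        have hne : (2 : ℝ) ^ (3 * m) ≠ 0 := by positivity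
        field_simp
        ring
      constructor
      · rw [hval]; linarith
      · rw [hval, show (m + 6) / 6 = m / 6 + 1 from by omega, pow_succ]
        linarith

/-- The 2-adic density: `N(2ⁿ)/2^{3n} → 2` as `n → ∞`. -/
theorem two_adic_density :
    Tendsto (fun n : ℕ => (N2 n : ℝ) / 2 ^ (3 * n)) atTop (nhds 2) := by
  have hdiv : Tendsto (fun n : ℕ => n / 6) atTop atTop := by
    apply Filter.tendsto_atTop_atTop.mpr
    intro b
    exact ⟨6 * b, fun n hn => by omega⟩
  have hgeo : Tendsto (fun k : ℕ => (1 / 4 : ℝ) ^ k) atTop (nhds 0) :=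
    tendsto_pow_atTop_nhds_zero_of_lt_one (by norm_num) (by norm_num)
  have hcomp : Tendsto (fun n : ℕ => (1 / 4 : ℝ) ^ (n / 6)) atTop (nhds 0) := hgeo.comp hdiv
  have hlow : Tendsto (fun n : ℕ => 2 - (1 / 4 : ℝ) ^ (n / 6)) atTop (nhds 2) := by
    simpa using tendsto_const_nhds.sub hcomp
  refine tendsto_of_tendsto_of_tendsto_of_le_of_le hlow tendsto_const_nhds
    (fun n => ?_) (fun n => ?_)
  · have := (N2_bound n).2; linarith
  · have := (N2_bound n).1; linarith
end

section
/- Let n ≥ 1 and k' ≥ 0 be integers with 2k' + 1 < n, and let v₂ denote the 2-adic valuation. Then #{(x₁,x₂) ∈ ℤ² : 0 ≤ x₁, x₂ < 2ⁿ and v₂(x₁² + x₂²) = 2k' + 1} = 2^{2n − 2k' − 2}. -/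
/-- 2-adic valuation of `2^j * m` with `m` odd is `j`. -/
lemma val2_pow_mul (j : ℕ) (m : ℤ) (hm : Odd m) :
    padicValInt 2 (2 ^ j * m) = j := by
  have hm0 : m ≠ 0 := by rintro rfl; simp at hm
  have hmn : m.natAbs ≠ 0 := Int.natAbs_ne_zero.mpr hm0
  have hodd : Odd m.natAbs := Int.natAbs_odd.mpr hm
  have hnd : ¬ (2 ∣ m.natAbs) := by
    rw [Nat.odd_iff] at hodd; omega
  have : ((2:ℤ) ^ j * m).natAbs = 2 ^ j * m.natAbs := by
    rw [Int.natAbs_mul, Int.natAbs_pow]; rfl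
  rw [padicValInt, this, padicValNat.mul (by positivity) hmn,
    padicValNat.prime_pow, padicValNat.eq_zero_of_not_dvd hnd]
  omega

lemma odd_sum_sq (u v : ℤ) (hu : Odd u) (hv : Odd v) :
    ∃ w : ℤ, Odd w ∧ u ^ 2 + v ^ 2 = 2 * w := by
  obtain ⟨a, rfl⟩ := hu
  obtain ⟨b, rfl⟩ := hv
  exact ⟨2 * (a ^ 2 + a + b ^ 2 + b) + 1, ⟨a ^ 2 + a + b ^ 2 + b, rfl⟩, by ring⟩

lemma exists_odd_factor (x : ℤ) (hx : x ≠ 0) : ∃ (α : ℕ) (u : ℤ), Odd u ∧ x = 2 ^ α * u := by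
  have hn : x.natAbs ≠ 0 := Int.natAbs_ne_zero.mpr hx
  set α := x.natAbs.factorization 2 with hα
  have hmul : 2 ^ α * (x.natAbs / 2 ^ α) = x.natAbs :=
    Nat.ordProj_mul_ordCompl_eq_self x.natAbs 2
  have hnd : ¬ (2 ∣ x.natAbs / 2 ^ α) := Nat.not_dvd_ordCompl Nat.prime_two hn
  have hodd : Odd ((x.natAbs / 2 ^ α : ℕ) : ℤ) := by
    rw [Int.odd_coe_nat, Nat.odd_iff]; omega
  have hmul' : (x.natAbs : ℤ) = 2 ^ α * ((x.natAbs / 2 ^ α : ℕ) : ℤ) := by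
    exact_mod_cast hmul.symm
  rcases Int.natAbs_eq x with hx' | hx'
  · exact ⟨α, (x.natAbs / 2 ^ α : ℕ), hodd, by
      linear_combination hx'.trans hmul'⟩
  · refine ⟨α, -((x.natAbs / 2 ^ α : ℕ) : ℤ), hodd.neg, ?_⟩
    rw [hmul'] at hx'
    linear_combination hx'

lemma forward_aux (k' α β : ℕ) (u v : ℤ) (hu : Odd u) (hv : Odd v) (hαβ : α ≤ β)
    (hval : padicValInt 2 ((2 ^ α * u) ^ 2 + (2 ^ β * v) ^ 2) = 2 * k' + 1) :
    α = k' ∧ β = k' := by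
  obtain ⟨γ, rfl⟩ := Nat.exists_eq_add_of_le hαβ
  rcases Nat.eq_zero_or_pos γ with rfl | hγ
  · obtain ⟨w, hw, hsum⟩ := odd_sum_sq u v hu hv
    have heq : (2 ^ α * u) ^ 2 + (2 ^ (α + 0) * v) ^ 2 = 2 ^ (2 * α + 1) * w := by
      have h1 : (2 ^ α * u) ^ 2 + (2 ^ (α + 0) * v) ^ 2
          = 2 ^ α * 2 ^ α * (u ^ 2 + v ^ 2) := by ring
      rw [h1, hsum, ← pow_add]; ring
    rw [heq, val2_pow_mul _ _ hw] at hval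
    omega
  · exfalso
    have hc : Odd (u ^ 2 + (2 ^ γ * v) ^ 2) := by
      have h1 : Odd (u ^ 2) := hu.pow
      have h2 : Even ((2 ^ γ * v) ^ 2) := by
        rw [Int.even_pow]
        refine ⟨Even.mul_right ?_ v, by norm_num⟩
        rw [Int.even_pow]
        exact ⟨⟨1, rfl⟩, by omega⟩
      exact h1.add_even h2
    have heq : (2 ^ α * u) ^ 2 + (2 ^ (α + γ) * v) ^ 2
        = 2 ^ (2 * α) * (u ^ 2 + (2 ^ γ * v) ^ 2) := by
      rw [pow_add (2:ℤ) α γ, two_mul, pow_add]; ring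
    rw [heq, val2_pow_mul _ _ hc] at hval
    omega

/-- Key characterization. -/
lemma key (k' : ℕ) (x y : ℤ) :
    (x ^ 2 + y ^ 2 ≠ 0 ∧ padicValInt 2 (x ^ 2 + y ^ 2) = 2 * k' + 1) ↔
      ((∃ u, Odd u ∧ x = 2 ^ k' * u) ∧ (∃ v, Odd v ∧ y = 2 ^ k' * v)) := by
  constructor
  · rintro ⟨hne, hval⟩
    have hx : x ≠ 0 := by
      rintro rfl
      have hy : y ≠ 0 := by rintro rfl; exact hne (by ring)
      obtain ⟨β, v, hv, rfl⟩ := exists_odd_factor y hy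
      have heq : (0:ℤ) ^ 2 + (2 ^ β * v) ^ 2 = 2 ^ (2 * β) * v ^ 2 := by
        rw [two_mul, pow_add]; ring
      rw [heq, val2_pow_mul _ _ hv.pow] at hval
      omega
    have hy : y ≠ 0 := by
      rintro rfl
      obtain ⟨α, u, hu, rfl⟩ := exists_odd_factor x hx
      have heq : (2 ^ α * u) ^ 2 + (0:ℤ) ^ 2 = 2 ^ (2 * α) * u ^ 2 := by
        rw [two_mul, pow_add]; ring
      rw [heq, val2_pow_mul _ _ hu.pow] at hval
      omega
    obtain ⟨α, u, hu, rfl⟩ := exists_odd_factor x hx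
    obtain ⟨β, v, hv, rfl⟩ := exists_odd_factor y hy
    rcases le_total α β with hle | hle
    · obtain ⟨h1, h2⟩ := forward_aux k' α β u v hu hv hle hval
      exact ⟨⟨u, hu, by rw [h1]⟩, ⟨v, hv, by rw [h2]⟩⟩
    · rw [add_comm] at hval
      obtain ⟨h1, h2⟩ := forward_aux k' β α v u hv hu hle hval
      exact ⟨⟨u, hu, by rw [h2]⟩, ⟨v, hv, by rw [h1]⟩⟩
  · rintro ⟨⟨u, hu, rfl⟩, ⟨v, hv, rfl⟩⟩
    obtain ⟨w, hw, hsum⟩ := odd_sum_sq u v hu hv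
    have heq : (2 ^ k' * u) ^ 2 + (2 ^ k' * v) ^ 2 = 2 ^ (2 * k' + 1) * w := by
      have h1 : (2 ^ k' * u) ^ 2 + (2 ^ k' * v) ^ 2
          = 2 ^ k' * 2 ^ k' * (u ^ 2 + v ^ 2) := by ring
      rw [h1, hsum, ← pow_add]; ring
    have hw0 : w ≠ 0 := by rintro rfl; simp at hw
    rw [heq]
    exact ⟨mul_ne_zero (by positivity) hw0, val2_pow_mul _ _ hw⟩

/-- The number of pairs `(x₁,x₂)` of residues modulo `2ⁿ` with
`v₂(x₁²+x₂²) = 2k'+1` equals `2^{2n-2k'-2}`, provided `2k'+1 < n`. -/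
theorem count_odd_two_adic_valuation (n k' : ℕ) (hn : 1 ≤ n) (h : 2 * k' + 1 < n) :
    Set.ncard {x : ℤ × ℤ |
        0 ≤ x.1 ∧ x.1 < 2 ^ n ∧ 0 ≤ x.2 ∧ x.2 < 2 ^ n ∧
        x.1 ^ 2 + x.2 ^ 2 ≠ 0 ∧
        padicValInt 2 (x.1 ^ 2 + x.2 ^ 2) = 2 * k' + 1} = 2 ^ (2 * n - 2 * k' - 2) := by
  set s := n - k' - 1 with hs
  have hns : n = k' + 1 + s := by omega
  have hpow : (2:ℤ) ^ n = 2 ^ k' * (2 * 2 ^ s) := by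
    rw [hns, pow_add, pow_add]; ring
  set F : Finset (ℤ × ℤ) :=
    (Finset.Ico (0:ℤ) (2 ^ s) ×ˢ Finset.Ico (0:ℤ) (2 ^ s)).image
      (fun p => (2 ^ k' * (2 * p.1 + 1), 2 ^ k' * (2 * p.2 + 1))) with hF
  have hset : {x : ℤ × ℤ |
        0 ≤ x.1 ∧ x.1 < 2 ^ n ∧ 0 ≤ x.2 ∧ x.2 < 2 ^ n ∧
        x.1 ^ 2 + x.2 ^ 2 ≠ 0 ∧
        padicValInt 2 (x.1 ^ 2 + x.2 ^ 2) = 2 * k' + 1} = ↑F := by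
    ext ⟨x, y⟩
    simp only [Set.mem_setOf_eq, hF, Finset.coe_image, Set.mem_image, Finset.mem_coe,
      Finset.mem_product, Finset.mem_Ico, Prod.exists]
    constructor
    · rintro ⟨hx0, hxn, hy0, hyn, hne, hval⟩
      obtain ⟨⟨u, hu, rfl⟩, ⟨v, hv, rfl⟩⟩ := (key k' x y).mp ⟨hne, hval⟩
      have h2k : (0:ℤ) < 2 ^ k' := by positivity
      obtain ⟨a, rfl⟩ := hu
      obtain ⟨b, rfl⟩ := hv
      have hu0 : 0 < 2 * a + 1 := by
        by_contra hc
        push_neg at hc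
        have h1 : 2 * a + 1 ≤ -1 := by omega
        nlinarith
      have hv0 : 0 < 2 * b + 1 := by
        by_contra hc
        push_neg at hc
        have h1 : 2 * b + 1 ≤ -1 := by omega
        nlinarith
      refine ⟨a, b, ⟨⟨by omega, ?_⟩, ⟨by omega, ?_⟩⟩, rfl⟩
      · rw [hpow] at hxn
        have := (mul_lt_mul_iff_right₀ h2k).mp hxn
        omega
      · rw [hpow] at hyn
        have := (mul_lt_mul_iff_right₀ h2k).mp hyn
        omega
    · rintro ⟨a, b, ⟨⟨ha0, ha⟩, ⟨hb0, hb⟩⟩, heq⟩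
      obtain ⟨rfl, rfl⟩ := Prod.mk.injEq .. ▸ heq
      have h2k : (0:ℤ) < 2 ^ k' := by positivity
      have hkey := (key k' (2 ^ k' * (2 * a + 1)) (2 ^ k' * (2 * b + 1))).mpr
        ⟨⟨2 * a + 1, ⟨a, rfl⟩, rfl⟩, ⟨2 * b + 1, ⟨b, rfl⟩, rfl⟩⟩
      refine ⟨by positivity, ?_, by positivity, ?_, hkey.1, hkey.2⟩
      · rw [hpow]
        exact (mul_lt_mul_iff_right₀ h2k).mpr (by omega)
      · rw [hpow]
        exact (mul_lt_mul_iff_right₀ h2k).mpr (by omega)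
  rw [hset, Set.ncard_coe_finset, hF]
  rw [Finset.card_image_of_injective _ (by
    intro ⟨a, b⟩ ⟨c, d⟩ hcd
    simp only [Prod.mk.injEq] at hcd
    have h2k : (0:ℤ) < 2 ^ k' := by positivity
    have h1 := mul_left_cancel₀ h2k.ne' hcd.1
    have h2 := mul_left_cancel₀ h2k.ne' hcd.2
    obtain rfl : a = c := by omega
    obtain rfl : b = d := by omega
    rfl)]
  rw [Finset.card_product, Int.card_Ico]
  have hcast : ((2:ℤ) ^ s - 0).toNat = 2 ^ s := by
    rw [sub_zero, show (2:ℤ) ^ s = ((2 ^ s : ℕ) : ℤ) by push_cast; ring, Int.toNat_natCast]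
  rw [hcast, ← pow_add]
  congr 1
  omega
end

section
/- Let n ≥ 1 and k' ≥ 0 be integers with 2k' < n, and let v₂ denote the 2-adic valuation. Then #{(x₁,x₂) ∈ ℤ² : 0 ≤ x₁, x₂ < 2ⁿ and v₂(x₁² + x₂²) = 2k'} = 2^{2n − 2k' − 1}. -/
lemma val2_pow_mul_odd (e : ℕ) (t : ℤ) (ht : Odd t) : padicValInt 2 (2 ^ e * t) = e := by
  haveI : Fact (Nat.Prime 2) := ⟨Nat.prime_two⟩
  have ht0 : t ≠ 0 := by rintro rfl; exact (Int.not_odd_iff_even.mpr Even.zero) ht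
  have hnd : ¬ ((2:ℕ) : ℤ) ∣ t := by
    obtain ⟨c, hc⟩ := ht
    intro ⟨d, hd⟩; omega
  rw [show ((2:ℤ)^e) = (((2^e : ℕ) : ℤ)) by push_cast; ring,
    padicValInt.mul (by positivity) ht0, padicValInt.of_nat, padicValNat.prime_pow,
    padicValInt.eq_zero_of_not_dvd hnd, Nat.add_zero]

lemma le_val2_of_dvd {m : ℕ} {s : ℤ} (hs : s ≠ 0) (hd : (2:ℤ) ^ m ∣ s) :
    m ≤ padicValInt 2 s := by
  haveI : Fact (Nat.Prime 2) := ⟨Nat.prime_two⟩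
  have := (padicValInt_dvd_iff (p := 2) m s).mp (by exact_mod_cast hd)
  tauto

lemma four_dvd_sq_add_sq {x y : ℤ} (h : (4:ℤ) ∣ x ^ 2 + y ^ 2) : 2 ∣ x ∧ 2 ∣ y := by
  obtain ⟨c, hc⟩ := h
  rcases Int.even_or_odd x with ⟨a, ha⟩ | ⟨a, ha⟩ <;>
    rcases Int.even_or_odd y with ⟨b, hb⟩ | ⟨b, hb⟩
  · exact ⟨⟨a, by omega⟩, ⟨b, by omega⟩⟩
  · exfalso; subst ha hb
    have : 4 * (a * a + b * b + b) + 1 = 4 * c := by linear_combination hc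
    omega
  · exfalso; subst ha hb
    have : 4 * (a * a + a + b * b) + 1 = 4 * c := by linear_combination hc
    omega
  · exfalso; subst ha hb
    have : 4 * (a * a + a + b * b + b) + 2 = 4 * c := by linear_combination hc
    omega

lemma pow_dvd_of_sq_add_sq (j : ℕ) : ∀ x y : ℤ, (2:ℤ) ^ (2 * j) ∣ x ^ 2 + y ^ 2 →
    (2:ℤ) ^ j ∣ x ∧ (2:ℤ) ^ j ∣ y := by
  induction j with
  | zero => intro x y _; simp
  | succ j ih =>
    intro x y hd
    have h4 : (4:ℤ) ∣ x ^ 2 + y ^ 2 := by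
      refine dvd_trans ?_ hd
      have : 2 ≤ 2 * (j + 1) := by omega
      calc (4:ℤ) = 2 ^ 2 := by norm_num
        _ ∣ 2 ^ (2 * (j+1)) := pow_dvd_pow 2 this
    obtain ⟨⟨a, ha⟩, ⟨b, hb⟩⟩ := four_dvd_sq_add_sq h4
    subst ha hb
    have hd' : (2:ℤ) ^ (2 * j) ∣ a ^ 2 + b ^ 2 := by
      obtain ⟨c, hc⟩ := hd
      refine ⟨c, ?_⟩
      have h4 : (4:ℤ) * (a^2+b^2) = 4 * (2 ^ (2*j) * c) := by
        rw [show (2:ℤ) ^ (2*(j+1)) = 4 * 2 ^ (2*j) by ring] at hc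
        linear_combination hc
      exact mul_left_cancel₀ (by norm_num) h4
    obtain ⟨ha, hb⟩ := ih a b hd'
    have e : (2:ℤ) ^ (j+1) = 2 * 2 ^ j := by ring
    rw [e]
    exact ⟨mul_dvd_mul_left 2 ha, mul_dvd_mul_left 2 hb⟩

lemma odd_of_not_dvd {k : ℕ} {u : ℤ} (h : ¬ (2:ℤ) ^ (k+1) ∣ 2 ^ k * u) : Odd u := by
  rcases Int.even_or_odd u with ⟨a, ha⟩ | hu
  · exact absurd ⟨a, by rw [ha]; ring⟩ h
  · exact hu

lemma val_case (k' : ℕ) {x y : ℤ} (hx : (2:ℤ) ^ k' ∣ x) (hx' : ¬ (2:ℤ) ^ (k'+1) ∣ x)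
    (hy : (2:ℤ) ^ (k'+1) ∣ y) :
    x ^ 2 + y ^ 2 ≠ 0 ∧ padicValInt 2 (x ^ 2 + y ^ 2) = 2 * k' := by
  obtain ⟨u, rfl⟩ := hx
  obtain ⟨w, rfl⟩ := hy
  have hu : Odd u := odd_of_not_dvd hx'
  obtain ⟨a, ha⟩ := hu
  have hodd : Odd (u ^ 2 + 4 * w ^ 2) := ⟨2 * (a ^ 2 + a) + 2 * w ^ 2, by rw [ha]; ring⟩
  have hs : (2 ^ k' * u) ^ 2 + (2 ^ (k'+1) * w) ^ 2 = 2 ^ (2 * k') * (u ^ 2 + 4 * w ^ 2) := by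
    ring
  rw [hs]
  constructor
  · intro h0
    have : u ^ 2 + 4 * w ^ 2 = 0 := by
      have := mul_eq_zero.mp h0
      simpa [pow_ne_zero] using this
    obtain ⟨c, hc⟩ := hodd
    rw [this] at hc; omega
  · exact val2_pow_mul_odd _ _ hodd

lemma val_char (k' : ℕ) (x y : ℤ) :
    (x ^ 2 + y ^ 2 ≠ 0 ∧ padicValInt 2 (x ^ 2 + y ^ 2) = 2 * k') ↔
    (((2:ℤ) ^ k' ∣ x ∧ ¬ (2:ℤ) ^ (k'+1) ∣ x ∧ (2:ℤ) ^ (k'+1) ∣ y) ∨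
     ((2:ℤ) ^ k' ∣ y ∧ ¬ (2:ℤ) ^ (k'+1) ∣ y ∧ (2:ℤ) ^ (k'+1) ∣ x)) := by
  constructor
  · rintro ⟨hne, hval⟩
    have hdvd : (2:ℤ) ^ (2 * k') ∣ x ^ 2 + y ^ 2 := by
      have := padicValInt_dvd (p := 2) (x ^ 2 + y ^ 2)
      rw [hval] at this
      exact_mod_cast this
    obtain ⟨⟨u, hu⟩, ⟨v, hv⟩⟩ := pow_dvd_of_sq_add_sq k' x y hdvd
    subst hu hv
    have hs : (2 ^ k' * u) ^ 2 + (2 ^ k' * v) ^ 2 = 2 ^ (2 * k') * (u ^ 2 + v ^ 2) := by ring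
    rcases Int.even_or_odd u with ⟨a, ha⟩ | ⟨a, ha⟩ <;>
      rcases Int.even_or_odd v with ⟨b, hb⟩ | ⟨b, hb⟩
    · exfalso
      have hd2 : (2:ℤ) ^ (2 * k' + 1) ∣ (2 ^ k' * u) ^ 2 + (2 ^ k' * v) ^ 2 :=
        ⟨2 * (a ^ 2 + b ^ 2), by rw [ha, hb]; ring⟩
      have := le_val2_of_dvd hne hd2
      omega
    · -- u even, v odd : right case
      right
      refine ⟨⟨v, rfl⟩, ?_, ⟨a, by rw [ha]; ring⟩⟩
      intro hd
      obtain ⟨c, hc⟩ := hd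
      have : v = 2 * c := by
        have : (2:ℤ) ^ k' * v = 2 ^ k' * (2 * c) := by rw [hc]; ring
        exact mul_left_cancel₀ (by positivity) this
      rw [hb] at this; omega
    · -- u odd, v even : left case
      left
      refine ⟨⟨u, rfl⟩, ?_, ⟨b, by rw [hb]; ring⟩⟩
      intro hd
      obtain ⟨c, hc⟩ := hd
      have : u = 2 * c := by
        have : (2:ℤ) ^ k' * u = 2 ^ k' * (2 * c) := by rw [hc]; ring
        exact mul_left_cancel₀ (by positivity) this
      rw [ha] at this; omega
    · exfalso
      have hodd : Odd (2 * (a ^ 2 + a + b ^ 2 + b) + 1) := ⟨a ^ 2 + a + b ^ 2 + b, by ring⟩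
      have hseq : (2 ^ k' * u) ^ 2 + (2 ^ k' * v) ^ 2 =
          2 ^ (2 * k' + 1) * (2 * (a ^ 2 + a + b ^ 2 + b) + 1) := by
        rw [ha, hb]; ring
      rw [hseq, val2_pow_mul_odd _ _ hodd] at hval
      omega
  · rintro (⟨hx, hx', hy⟩ | ⟨hy, hy', hx⟩)
    · exact val_case k' hx hx' hy
    · have := val_case k' hy hy' hx
      rwa [add_comm (y ^ 2)] at this

section count
variable (n k' : ℕ)

lemma memA (hkn : k' + 1 ≤ n) (x : ℤ) :
    x ∈ (Finset.range (2 ^ (n - k' - 1))).image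
      (fun u : ℕ => (2:ℤ) ^ k' * (2 * u + 1)) ↔
    0 ≤ x ∧ x < 2 ^ n ∧ (2:ℤ) ^ k' ∣ x ∧ ¬ (2:ℤ) ^ (k'+1) ∣ x := by
  have hpow : (2:ℤ) ^ n = 2 ^ k' * (2 * 2 ^ (n - k' - 1)) := by
    rw [show (2:ℤ) ^ k' * (2 * 2 ^ (n-k'-1)) = 2 ^ (k' + 1 + (n - k' - 1)) by ring]
    congr 1; omega
  simp only [Finset.mem_image, Finset.mem_range]
  constructor
  · rintro ⟨u, hu, rfl⟩
    have hub : (u:ℤ) < 2 ^ (n - k' - 1) := by exact_mod_cast hu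
    refine ⟨by positivity, ?_, ⟨2 * u + 1, rfl⟩, ?_⟩
    · rw [hpow]
      have : (2:ℤ) * u + 1 < 2 * 2 ^ (n - k' - 1) := by omega
      have h2 : (0:ℤ) < 2 ^ k' := by positivity
      nlinarith
    · intro hd
      have := odd_of_not_dvd (k := k') (u := 2 * (u:ℤ) + 1)
      obtain ⟨c, hc⟩ := hd
      have heq : (2:ℤ) * u + 1 = 2 * c := by
        have : (2:ℤ) ^ k' * (2 * u + 1) = 2 ^ k' * (2 * c) := by rw [hc]; ring
        exact mul_left_cancel₀ (by positivity) this
      omega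
  · rintro ⟨hx0, hxn, ⟨m, rfl⟩, hnd⟩
    have hm : Odd m := odd_of_not_dvd hnd
    obtain ⟨a, ha⟩ := hm
    have h2k : (0:ℤ) < 2 ^ k' := by positivity
    have hm0 : 0 ≤ m := by
      by_contra hneg
      push_neg at hneg
      nlinarith
    have ha0 : 0 ≤ a := by omega
    have hab : a < 2 ^ (n - k' - 1) := by
      rw [hpow] at hxn
      have : m < 2 * 2 ^ (n - k' - 1) := by
        by_contra hge
        push_neg at hge
        nlinarith
      omega
    refine ⟨a.toNat, ?_, ?_⟩
    · have : ((a.toNat : ℤ)) < ((2 ^ (n - k' - 1) : ℕ) : ℤ) := by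
        push_cast; omega
      exact_mod_cast this
    · rw [ha]; push_cast; rw [Int.toNat_of_nonneg ha0]

lemma memB (hkn : k' + 1 ≤ n) (x : ℤ) :
    x ∈ (Finset.range (2 ^ (n - k' - 1))).image
      (fun w : ℕ => (2:ℤ) ^ (k'+1) * w) ↔
    0 ≤ x ∧ x < 2 ^ n ∧ (2:ℤ) ^ (k'+1) ∣ x := by
  have hpow : (2:ℤ) ^ n = 2 ^ (k'+1) * 2 ^ (n - k' - 1) := by
    rw [← pow_add]; congr 1; omega
  simp only [Finset.mem_image, Finset.mem_range]
  constructor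
  · rintro ⟨w, hw, rfl⟩
    have hwb : (w:ℤ) < 2 ^ (n - k' - 1) := by exact_mod_cast hw
    refine ⟨by positivity, ?_, ⟨w, rfl⟩⟩
    rw [hpow]
    have h2 : (0:ℤ) < 2 ^ (k'+1) := by positivity
    nlinarith
  · rintro ⟨hx0, hxn, ⟨m, rfl⟩⟩
    have h2k : (0:ℤ) < 2 ^ (k'+1) := by positivity
    have hm0 : 0 ≤ m := by
      by_contra hneg; push_neg at hneg; nlinarith
    have hmb : m < 2 ^ (n - k' - 1) := by
      rw [hpow] at hxn
      by_contra hge; push_neg at hge; nlinarith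
    refine ⟨m.toNat, ?_, ?_⟩
    · have : ((m.toNat : ℤ)) < ((2 ^ (n - k' - 1) : ℕ) : ℤ) := by push_cast; omega
      exact_mod_cast this
    · rw [Int.toNat_of_nonneg hm0]

end count

/-- The number of pairs `(x₁,x₂)` of residues modulo `2ⁿ` with
`v₂(x₁²+x₂²) = 2k'` equals `2^{2n-2k'-1}`, provided `2k' < n`. -/
theorem count_even_two_adic_valuation (n k' : ℕ) (hn : 1 ≤ n) (h : 2 * k' < n) :
    Set.ncard {x : ℤ × ℤ |
        0 ≤ x.1 ∧ x.1 < 2 ^ n ∧ 0 ≤ x.2 ∧ x.2 < 2 ^ n ∧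
        x.1 ^ 2 + x.2 ^ 2 ≠ 0 ∧
        padicValInt 2 (x.1 ^ 2 + x.2 ^ 2) = 2 * k'} = 2 ^ (2 * n - 2 * k' - 1) := by
  have hkn : k' + 1 ≤ n := by omega
  set M : ℕ := 2 ^ (n - k' - 1) with hM
  set A : Finset ℤ := (Finset.range M).image (fun u : ℕ => (2:ℤ) ^ k' * (2 * u + 1)) with hA
  set B : Finset ℤ := (Finset.range M).image (fun w : ℕ => (2:ℤ) ^ (k'+1) * w) with hB
  have hAB : Disjoint A B := by
    rw [Finset.disjoint_left]
    intro x hxA hxB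
    exact ((memA n k' hkn x).mp hxA).2.2.2 ((memB n k' hkn x).mp hxB).2.2
  have hcardA : A.card = M := by
    rw [hA, Finset.card_image_of_injective _ ?_, Finset.card_range]
    intro u v huv
    have : (2:ℤ) * u + 1 = 2 * v + 1 := mul_left_cancel₀ (by positivity) huv
    omega
  have hcardB : B.card = M := by
    rw [hB, Finset.card_image_of_injective _ ?_, Finset.card_range]
    intro u v huv
    have : ((u:ℤ)) = v := mul_left_cancel₀ (by positivity) huv
    omega
  have hdisj : Disjoint (A ×ˢ B) (B ×ˢ A) := by
    rw [Finset.disjoint_left]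
    rintro ⟨x, y⟩ hx hy
    rw [Finset.mem_product] at hx hy
    exact Finset.disjoint_left.mp hAB hx.1 hy.1
  have hset : {x : ℤ × ℤ |
        0 ≤ x.1 ∧ x.1 < 2 ^ n ∧ 0 ≤ x.2 ∧ x.2 < 2 ^ n ∧
        x.1 ^ 2 + x.2 ^ 2 ≠ 0 ∧
        padicValInt 2 (x.1 ^ 2 + x.2 ^ 2) = 2 * k'} = ↑(A ×ˢ B ∪ B ×ˢ A) := by
    ext ⟨x, y⟩
    simp only [Set.mem_setOf_eq, Finset.coe_union, Set.mem_union, Finset.mem_coe,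
      Finset.mem_product]
    rw [memA n k' hkn x, memB n k' hkn y, memB n k' hkn x, memA n k' hkn y]
    constructor
    · rintro ⟨hx0, hxn, hy0, hyn, hne, hval⟩
      rcases (val_char k' x y).mp ⟨hne, hval⟩ with ⟨h1, h2, h3⟩ | ⟨h1, h2, h3⟩
      · exact Or.inl ⟨⟨hx0, hxn, h1, h2⟩, hy0, hyn, h3⟩
      · exact Or.inr ⟨⟨hx0, hxn, h3⟩, hy0, hyn, h1, h2⟩
    · rintro (⟨⟨hx0, hxn, h1, h2⟩, hy0, hyn, h3⟩ | ⟨⟨hx0, hxn, h3⟩, hy0, hyn, h1, h2⟩)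
      · obtain ⟨hne, hval⟩ := (val_char k' x y).mpr (Or.inl ⟨h1, h2, h3⟩)
        exact ⟨hx0, hxn, hy0, hyn, hne, hval⟩
      · obtain ⟨hne, hval⟩ := (val_char k' x y).mpr (Or.inr ⟨h1, h2, h3⟩)
        exact ⟨hx0, hxn, hy0, hyn, hne, hval⟩
  rw [hset, Set.ncard_coe_finset, Finset.card_union_of_disjoint hdisj,
    Finset.card_product, Finset.card_product, hcardA, hcardB]
  rw [hM, ← pow_add, ← two_mul, ← pow_succ']
  congr 1
  omega
end

section
/- The infinite product τ = ∏_{p prime} (1 − 1/p)⁴ (1 − χ(p)/p)³ (1 + (2 + 3χ(p) + 2χ(p)²)/p + χ(p)²/p²) over all primes p converges (the family of factors is multipliable) and its value is a strictly positive real number. -/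
lemma abs_log_le_two_mul {y : ℝ} (h : 1/2 ≤ y) : |Real.log y| ≤ 2 * |y - 1| := by
  have hy : 0 < y := by linarith
  have hinv : 1 - y⁻¹ ≤ Real.log y := Real.one_sub_inv_le_log_of_pos hy
  have hup : Real.log y ≤ y - 1 := Real.log_le_sub_one_of_pos hy
  have hyy : y⁻¹ * y = 1 := inv_mul_cancel₀ hy.ne'
  rw [abs_le]
  constructor
  · rcases abs_cases (y - 1) with ⟨he, hc⟩ | ⟨he, hc⟩ <;> rw [he] <;> nlinarith [hinv, hyy, hy]
  · calc Real.log y ≤ y - 1 := hup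
      _ ≤ |y - 1| := le_abs_self _
      _ ≤ 2 * |y - 1| := by nlinarith [abs_nonneg (y - 1)]

lemma case_chi_one {q : ℝ} (hq : 5 ≤ q) :
    0 < (1 - 1/q)^4 * (1 - 1/q)^3 * (1 + 7/q + 1/q^2) ∧
    |Real.log ((1 - 1/q)^4 * (1 - 1/q)^3 * (1 + 7/q + 1/q^2))| ≤ 60/q^2 := by
  have hq0 : 0 < q := by linarith
  have hx : 0 < 1/q := by positivity
  have hx5 : 1/q ≤ 1/5 := by rw [div_le_div_iff₀ hq0 (by norm_num)]; linarith
  have e2 : 1/q^2 = (1/q)^2 := by rw [one_div_pow]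
  have e7 : 7/q = 7*(1/q) := by ring
  rw [e2, e7]
  set x := 1/q with hxdef
  have hF : 1/2 ≤ (1-x)^4 * (1-x)^3 * (1 + 7*x + x^2) := by
    nlinarith [mul_nonneg (mul_nonneg hx.le hx.le) hx.le, sq_nonneg x,
      sq_nonneg (x*(1/5-x)), sq_nonneg (x^2*(1/5-x)), mul_nonneg (sub_nonneg.2 hx5) hx.le,
      mul_nonneg (mul_nonneg (sub_nonneg.2 hx5) (sub_nonneg.2 hx5)) hx.le, sq_nonneg (x^3),
      sq_nonneg (x^2), mul_nonneg (mul_nonneg (sub_nonneg.2 hx5) hx.le) hx.le]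
  have habs : |(1-x)^4 * (1-x)^3 * (1 + 7*x + x^2) - 1| ≤ 30*x^2 := by
    rw [abs_le]
    constructor <;> nlinarith [sq_nonneg x, pow_pos hx 3, pow_pos hx 4, pow_pos hx 5,
      sq_nonneg (x^2), sq_nonneg (x^3), sq_nonneg (x^4),
      pow_le_pow_left₀ hx.le hx5 2, pow_le_pow_left₀ hx.le hx5 3]
  refine ⟨by linarith, ?_⟩
  calc |Real.log ((1-x)^4 * (1-x)^3 * (1 + 7*x + x^2))|
      ≤ 2 * |(1-x)^4 * (1-x)^3 * (1 + 7*x + x^2) - 1| := abs_log_le_two_mul hF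
    _ ≤ 2 * (30*x^2) := by linarith [habs]
    _ = 60 * x^2 := by ring
    _ = 60 / q^2 := by rw [hxdef]; ring

lemma case_chi_neg_one {q : ℝ} (hq : 3 ≤ q) :
    0 < (1 - 1/q)^4 * (1 + 1/q)^3 * (1 + 1/q + 1/q^2) ∧
    |Real.log ((1 - 1/q)^4 * (1 + 1/q)^3 * (1 + 1/q + 1/q^2))| ≤ 60/q^2 := by
  have hq0 : 0 < q := by linarith
  have hx : 0 < 1/q := by positivity
  have hx3 : 1/q ≤ 1/3 := by rw [div_le_div_iff₀ hq0 (by norm_num)]; linarith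
  have e2 : 1/q^2 = (1/q)^2 := by rw [one_div_pow]
  rw [e2]
  set x := 1/q with hxdef
  have hF : 1/2 ≤ (1-x)^4 * (1+x)^3 * (1 + x + x^2) := by
    nlinarith [sq_nonneg x, sq_nonneg (x^2), sq_nonneg (x^3), mul_nonneg (sub_nonneg.2 hx3) hx.le,
      sq_nonneg (x*(1/3-x)), sq_nonneg (x^2*(1/3-x)),
      mul_nonneg (mul_nonneg (sub_nonneg.2 hx3) (sub_nonneg.2 hx3)) hx.le,
      mul_nonneg (mul_nonneg (sub_nonneg.2 hx3) hx.le) hx.le]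
  have habs : |(1-x)^4 * (1+x)^3 * (1 + x + x^2) - 1| ≤ 30*x^2 := by
    rw [abs_le]
    constructor <;> nlinarith [sq_nonneg x, sq_nonneg (x^2), sq_nonneg (x^3), sq_nonneg (x^4),
      mul_nonneg (sub_nonneg.2 hx3) hx.le, pow_pos hx 3, pow_pos hx 5,
      sq_nonneg (x*(1/3-x)), sq_nonneg (x^2*(1/3-x))]
  refine ⟨by linarith, ?_⟩
  calc |Real.log ((1-x)^4 * (1+x)^3 * (1 + x + x^2))|
      ≤ 2 * |(1-x)^4 * (1+x)^3 * (1 + x + x^2) - 1| := abs_log_le_two_mul hF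
    _ ≤ 2 * (30*x^2) := by linarith [habs]
    _ = 60 * x^2 := by ring
    _ = 60 / q^2 := by rw [hxdef]; ring

noncomputable def tauF (p : Nat.Primes) : ℝ :=
  (1 - 1 / (p : ℝ)) ^ 4 * (1 - chi p / (p : ℝ)) ^ 3 *
    (1 + (2 + 3 * chi p + 2 * (chi p) ^ 2) / (p : ℝ) + (chi p) ^ 2 / (p : ℝ) ^ 2)

lemma tauF_key (p : Nat.Primes) : 0 < tauF p ∧ |Real.log (tauF p)| ≤ 60 / (p : ℝ) ^ 2 := by
  obtain ⟨n, hp⟩ := p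
  have hcast : ((⟨n, hp⟩ : Nat.Primes) : ℝ) = (n : ℝ) := rfl
  rcases hp.eq_two_or_odd' with rfl | hodd
  · have hchi : chi 2 = 0 := by norm_num [chi]
    have e : tauF ⟨2, hp⟩ = 1/8 := by
      simp only [tauF, hcast, hchi]; norm_num
    rw [e, hcast]
    refine ⟨by norm_num, ?_⟩
    have hl : Real.log (1/8 : ℝ) = -Real.log 8 := by rw [one_div, Real.log_inv]
    rw [hl, abs_neg, abs_of_nonneg (Real.log_nonneg (by norm_num))]
    have h8 := Real.log_le_sub_one_of_pos (show (0:ℝ) < 8 by norm_num)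
    norm_num
    linarith
  · have h2 : n % 2 = 1 := Nat.odd_iff.mp hodd
    have h3 : 3 ≤ n := by have := hp.two_le; omega
    have h4 : n % 4 = 1 ∨ n % 4 = 3 := by omega
    rcases h4 with h4 | h4
    · have hchi : chi n = 1 := by simp [chi, h4]
      have h5 : 5 ≤ n := by omega
      have h5' : (5:ℝ) ≤ (n:ℝ) := by exact_mod_cast h5
      have e : tauF ⟨n, hp⟩
          = (1 - 1/(n:ℝ))^4 * (1 - 1/(n:ℝ))^3 * (1 + 7/(n:ℝ) + 1/(n:ℝ)^2) := by
        simp only [tauF, hcast, hchi]; ring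
      rw [e, hcast]
      exact case_chi_one h5'
    · have hchi : chi n = -1 := by simp [chi, h4]
      have h3' : (3:ℝ) ≤ (n:ℝ) := by exact_mod_cast h3
      have e : tauF ⟨n, hp⟩
          = (1 - 1/(n:ℝ))^4 * (1 + 1/(n:ℝ))^3 * (1 + 1/(n:ℝ) + 1/(n:ℝ)^2) := by
        simp only [tauF, hcast, hchi]; ring
      rw [e, hcast]
      exact case_chi_neg_one h3'

/-- The Euler product `τ` converges and its value is strictly positive. -/
theorem tau_convergent_positive :
    Multipliable (fun p : Nat.Primes =>
      (1 - 1 / (p : ℝ)) ^ 4 * (1 - chi p / (p : ℝ)) ^ 3 *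
        (1 + (2 + 3 * chi p + 2 * (chi p) ^ 2) / (p : ℝ) + (chi p) ^ 2 / (p : ℝ) ^ 2)) ∧
    0 < ∏' p : Nat.Primes,
      (1 - 1 / (p : ℝ)) ^ 4 * (1 - chi p / (p : ℝ)) ^ 3 *
        (1 + (2 + 3 * chi p + 2 * (chi p) ^ 2) / (p : ℝ) + (chi p) ^ 2 / (p : ℝ) ^ 2) := by
  have key := tauF_key
  have hsum60 : Summable (fun p : Nat.Primes => 60 / (p : ℝ) ^ 2) := by
    have h1 : Summable (fun n : ℕ => 60 * (1/(n:ℝ)^2)) :=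
      (Real.summable_one_div_nat_pow.mpr one_lt_two).mul_left 60
    have h2 : Summable (fun n : ℕ => 60/(n:ℝ)^2) := h1.congr (fun n => by ring)
    exact h2.comp_injective Nat.Primes.coe_nat_injective
  have hlogsum : Summable (fun p : Nat.Primes => Real.log (tauF p)) :=
    Summable.of_abs
      (Summable.of_nonneg_of_le (fun p => abs_nonneg _) (fun p => (key p).2) hsum60)
  have hmult : Multipliable (fun p : Nat.Primes => tauF p) :=
    Real.multipliable_of_summable_log (fun p => (key p).1) hlogsum
  refine ⟨hmult, ?_⟩
  have h := Real.rexp_tsum_eq_tprod (fun p => (key p).1) hlogsum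
  show 0 < ∏' p : Nat.Primes, tauF p
  rw [← h]
  exact Real.exp_pos _
end

section
/- Consider vectors v = (e₁, e₂, e₂', ẽ₁, ẽ₁', ẽ₂, ẽ₂', ẽ₃, ẽ₃') ∈ ℕ⁹ satisfying the linear system: ẽ₃' + ẽ₁ = ẽ₃ + ẽ₁'; ẽ₂' + 2ẽ₃ = ẽ₂ + 2ẽ₃'; e₂ + ẽ₃' = 2ẽ₃; and e₂' + ẽ₃ = 2ẽ₃'. Then v satisfies this system if and only if v is a sum with nonnegative integer coefficients of the six vectors g₁ = (1,0,0,0,0,0,0,0,0), g₂ = (0,0,0,1,1,0,0,0,0), g₃ = (0,0,0,0,0,1,1,0,0), g₄ = (0,1,1,0,0,0,0,1,1), g₅ = (0,3,0,1,0,2,0,2,1) and g₆ = (0,0,3,0,1,0,2,1,2). That is, the submonoid of ℕ⁹ cut out by the system equals the submonoid generated by g₁, …, g₆. -/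
private lemma vec9_5 {α : Type*} (a0 a1 a2 a3 a4 a5 a6 a7 a8 : α) :
    ![a0,a1,a2,a3,a4,a5,a6,a7,a8] 5 = a5 := rfl
private lemma vec9_6 {α : Type*} (a0 a1 a2 a3 a4 a5 a6 a7 a8 : α) :
    ![a0,a1,a2,a3,a4,a5,a6,a7,a8] 6 = a6 := rfl
private lemma vec9_7 {α : Type*} (a0 a1 a2 a3 a4 a5 a6 a7 a8 : α) :
    ![a0,a1,a2,a3,a4,a5,a6,a7,a8] 7 = a7 := rfl
private lemma vec9_8 {α : Type*} (a0 a1 a2 a3 a4 a5 a6 a7 a8 : α) :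
    ![a0,a1,a2,a3,a4,a5,a6,a7,a8] 8 = a8 := rfl
private lemma vec6_4 {α : Type*} (a0 a1 a2 a3 a4 a5 : α) :
    ![a0,a1,a2,a3,a4,a5] 4 = a4 := rfl
private lemma vec6_5 {α : Type*} (a0 a1 a2 a3 a4 a5 : α) :
    ![a0,a1,a2,a3,a4,a5] 5 = a5 := rfl

/-- The submonoid of `ℕ⁹` cut out by the linear system arising in the Cox ring computation
is generated by the six vectors `g₁, …, g₆`. Coordinates record the exponents of
`t₁, t₂, t₂', t̃₁, t̃₁', t̃₂, t̃₂', t̃₃, t̃₃'` in this order. -/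
theorem cox_ring_monoid (v : Fin 9 → ℕ) :
    (v 8 + v 3 = v 7 + v 4 ∧
     v 6 + 2 * v 7 = v 5 + 2 * v 8 ∧
     v 1 + v 8 = 2 * v 7 ∧
     v 2 + v 7 = 2 * v 8) ↔
    ∃ c : Fin 6 → ℕ,
      v = c 0 • ![1,0,0,0,0,0,0,0,0] + c 1 • ![0,0,0,1,1,0,0,0,0] +
          c 2 • ![0,0,0,0,0,1,1,0,0] + c 3 • ![0,1,1,0,0,0,0,1,1] +
          c 4 • ![0,3,0,1,0,2,0,2,1] + c 5 • ![0,0,3,0,1,0,2,1,2] := by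
  constructor
  · rintro ⟨h1, h2, h3, h4⟩
    rcases le_total (v 8) (v 7) with h | h
    · refine ⟨![v 0, v 4, v 6, 2 * v 8 - v 7, v 7 - v 8, 0], ?_⟩
      funext i
      fin_cases i <;>
        simp [vec9_5, vec9_6, vec9_7, vec9_8, vec6_4, vec6_5, Matrix.cons_val_zero, Matrix.cons_val_one, Matrix.head_cons,
          Matrix.cons_val_succ] <;> omega
    · refine ⟨![v 0, v 3, v 5, 2 * v 7 - v 8, 0, v 8 - v 7], ?_⟩
      funext i
      fin_cases i <;>
        simp [vec9_5, vec9_6, vec9_7, vec9_8, vec6_4, vec6_5, Matrix.cons_val_zero, Matrix.cons_val_one, Matrix.head_cons,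
          Matrix.cons_val_succ] <;> omega
  · rintro ⟨c, rfl⟩
    refine ⟨?_, ?_, ?_, ?_⟩ <;>
      simp [vec9_5, vec9_6, vec9_7, vec9_8, vec6_4, vec6_5, Matrix.cons_val_zero, Matrix.cons_val_one, Matrix.head_cons,
          Matrix.cons_val_succ] <;> ring
end
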